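/- arXiv:2412.10395 — 5 statements merged into one kernel-verified Lean document; each statement's English description precedes it below -/
import Mathlib

section
/- Let a ∈ ℝ with 0 < a < 1 and let b, c, k, m ∈ ℂ satisfy Re(b) > 0, Re(m) > 0 and ‖c‖ < 1. Then ∫₀¹ t^{m−1} (−log(a t))^k / (1 + c t^b) dt = Σ_{j=0}^∞ (−c)^j · Γ(1 + k, −(b j + m) log a) / (a^{b j + m} · (b j + m)^{k+1}). -/
open MeasureTheory Set Real Filter Asymptotics

lemma int_master {σ C : ℝ} (p : ℝ) (hσ : 0 < σ) (hC : 0 < C) :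
    IntegrableOn (fun v => Real.exp (-σ * v) * (v + C) ^ p) (Set.Ioi (0:ℝ)) := by
  apply integrable_of_isBigO_exp_neg (half_pos hσ)
  · apply ContinuousOn.mul (by fun_prop)
    apply ContinuousOn.rpow_const (by fun_prop)
    intro x hx
    have : (0:ℝ) ≤ x := hx
    exact Or.inl (by positivity)
  · have h1 : (fun x : ℝ => (x + C) ^ p) =o[atTop] fun x => Real.exp (σ/2 * (x + C)) :=
      (isLittleO_rpow_exp_pos_mul_atTop p (half_pos hσ)).comp_tendsto
        (tendsto_atTop_add_const_right atTop C tendsto_id)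
    have h2 : (fun x : ℝ => Real.exp (σ/2 * (x + C))) =O[atTop] fun x => Real.exp (σ/2 * x) := by
      apply isBigO_of_le' (c := Real.exp (σ/2 * C))
      intro x
      rw [Real.norm_eq_abs, Real.abs_exp, Real.norm_eq_abs, Real.abs_exp, ← Real.exp_add]
      apply Real.exp_le_exp.mpr
      ring_nf
      exact le_rfl
    have h3 := (isBigO_refl (fun x : ℝ => Real.exp (-σ * x)) atTop).mul (h1.isBigO.trans h2)
    refine h3.congr (fun x => rfl) (fun x => ?_)
    rw [← Real.exp_add]; ring_nf
open MeasureTheory Set Real Filter Asymptotics Complex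

private lemma exp_neg_deriv : ∀ v ∈ Ioi (0:ℝ),
    HasDerivWithinAt (fun v : ℝ => Real.exp (-v)) (-Real.exp (-v)) (Ioi 0) v := fun v _ =>
  (((Real.hasDerivAt_exp (-v)).comp v (hasDerivAt_neg v)).congr_deriv (by ring)).hasDerivWithinAt

private lemma exp_neg_image : (fun v : ℝ => Real.exp (-v)) '' Ioi 0 = Ioo 0 1 := by
  ext x
  constructor
  · rintro ⟨v, hv, rfl⟩
    exact ⟨Real.exp_pos _, by rw [Real.exp_lt_one_iff]; simpa using hv⟩
  · rintro ⟨h0, h1⟩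
    exact ⟨-Real.log x, by simpa using Real.log_neg h0 h1, by simp [Real.exp_log h0]⟩

private lemma exp_neg_inj : InjOn (fun v : ℝ => Real.exp (-v)) (Ioi 0) :=
  fun x _ y _ h => by simpa using Real.exp_injective h

private lemma cpow_ofReal_exp (x : ℝ) (w : ℂ) :
    ((Real.exp x : ℝ) : ℂ) ^ w = Complex.exp (x * w) := by
  rw [Complex.cpow_def_of_ne_zero (by simp [Real.exp_ne_zero]), Complex.ofReal_exp,
    Complex.log_exp (by simpa using Real.pi_pos) (by simpa using Real.pi_nonneg)]

-- the integrand transform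
private lemma integrand_eq {a : ℝ} (ha0 : 0 < a) (k s : ℂ) (v : ℝ) :
    Real.exp (-v) • (((Real.exp (-v) : ℝ) : ℂ) ^ (s - 1) *
      (-(Complex.log ((a:ℂ) * ((Real.exp (-v) : ℝ) : ℂ)))) ^ k)
    = Complex.exp (-(s * v)) * ((v : ℂ) - Real.log a) ^ k := by
  have h1 : (a:ℂ) * ((Real.exp (-v) : ℝ) : ℂ) = ((a * Real.exp (-v) : ℝ) : ℂ) := by push_cast; ring
  have h2 : Complex.log ((a * Real.exp (-v) : ℝ) : ℂ) = ((Real.log a - v : ℝ) : ℂ) := by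
    rw [← Complex.ofReal_log (by positivity : (0:ℝ) ≤ a * Real.exp (-v))]
    norm_cast
    rw [Real.log_mul (ne_of_gt ha0) (Real.exp_ne_zero _), Real.log_exp]; ring
  have h3 : -(((Real.log a - v : ℝ)) : ℂ) = (v : ℂ) - Real.log a := by push_cast; ring
  rw [h1, h2, h3, cpow_ofReal_exp, real_smul, Complex.ofReal_exp, ← mul_assoc,
    ← Complex.exp_add]
  congr 2
  push_cast
  ring
open MeasureTheory Set Real Filter Asymptotics Complex

section
variable {a : ℝ}

private lemma subst_eq (ha0 : 0 < a) (k s : ℂ) :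
    (∫ t in Ioo (0:ℝ) 1, (t:ℂ) ^ (s - 1) * (-(Complex.log ((a:ℂ) * (t:ℂ)))) ^ k)
    = ∫ v in Ioi (0:ℝ), Complex.exp (-(s * v)) * ((v:ℂ) - Real.log a) ^ k := by
  rw [← exp_neg_image, integral_image_eq_integral_abs_deriv_smul measurableSet_Ioi
    exp_neg_deriv exp_neg_inj]
  refine setIntegral_congr_fun measurableSet_Ioi (fun v _ => ?_)
  simp only [abs_neg, abs_of_pos (Real.exp_pos _)]
  exact integrand_eq ha0 k s v

private lemma subst_int_iff (ha0 : 0 < a) (k s : ℂ) :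
    IntegrableOn (fun t : ℝ => (t:ℂ) ^ (s - 1) * (-(Complex.log ((a:ℂ) * (t:ℂ)))) ^ k)
      (Ioo 0 1) ↔
    IntegrableOn (fun v : ℝ => Complex.exp (-(s * v)) * ((v:ℂ) - Real.log a) ^ k) (Ioi 0) := by
  rw [← exp_neg_image, integrableOn_image_iff_integrableOn_abs_deriv_smul measurableSet_Ioi
    exp_neg_deriv exp_neg_inj]
  refine integrableOn_congr_fun (fun v _ => ?_) measurableSet_Ioi
  simp only [abs_neg, abs_of_pos (Real.exp_pos _)]
  exact integrand_eq ha0 k s v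

private lemma J_cont (ha0 : 0 < a) (ha1 : a < 1) (k s : ℂ) :
    ContinuousOn (fun v : ℝ => Complex.exp (-(s * v)) * ((v:ℂ) - Real.log a) ^ k) (Ioi 0) := by
  have hL : Real.log a < 0 := Real.log_neg ha0 ha1
  apply ContinuousOn.mul (by fun_prop)
  apply ContinuousOn.cpow (by fun_prop) continuousOn_const
  intro v hv
  refine Or.inl ?_
  simp only [Complex.sub_re, Complex.ofReal_re]
  have : (0:ℝ) < v := hv
  linarith [(Complex.ofReal_re (Real.log a))]

private lemma J_norm (ha0 : 0 < a) (ha1 : a < 1) (k s : ℂ) {v : ℝ} (hv : 0 < v) :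
    ‖Complex.exp (-(s * v)) * ((v:ℂ) - Real.log a) ^ k‖
      = Real.exp (-s.re * v) * (v + -Real.log a) ^ k.re := by
  have hL : Real.log a < 0 := Real.log_neg ha0 ha1
  have h1 : ((v:ℂ) - Real.log a) = ((v - Real.log a : ℝ) : ℂ) := by push_cast; ring
  rw [norm_mul, h1, Complex.norm_exp,
    Complex.norm_cpow_eq_rpow_re_of_pos (by linarith)]
  have h2 : (-(s * (v:ℂ))).re = -s.re * v := by simp [Complex.mul_re]
  rw [h2, sub_eq_add_neg]

private lemma J_integrable (ha0 : 0 < a) (ha1 : a < 1) (k : ℂ) {s : ℂ} (hs : 0 < s.re) :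
    IntegrableOn (fun v : ℝ => Complex.exp (-(s * v)) * ((v:ℂ) - Real.log a) ^ k) (Ioi 0) := by
  have hL : Real.log a < 0 := Real.log_neg ha0 ha1
  refine Integrable.mono' (int_master k.re hs (neg_pos.mpr hL))
    ((J_cont ha0 ha1 k s).aestronglyMeasurable measurableSet_Ioi) ?_
  filter_upwards [ae_restrict_mem measurableSet_Ioi] with v hv
  rw [J_norm ha0 ha1 k s hv]

end
section
variable {a : ℝ}

private lemma I_eq_J_real (ha0 : 0 < a) (ha1 : a < 1) (k : ℂ) {s : ℝ} (hs : 0 < s) :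
    (∫ u in Ioi (0:ℝ), Complex.exp (-(u:ℂ)) * ((u:ℂ) - (s:ℂ) * Real.log a) ^ k)
    = (s:ℂ) ^ (k+1) *
      ∫ v in Ioi (0:ℝ), Complex.exp (-((s:ℂ) * v)) * ((v:ℂ) - Real.log a) ^ k := by
  have hL : Real.log a < 0 := Real.log_neg ha0 ha1
  have h := integral_comp_mul_left_Ioi
    (fun u : ℝ => Complex.exp (-(u:ℂ)) * ((u:ℂ) - (s:ℂ) * Real.log a) ^ k) 0 hs
  simp only [mul_zero] at h
  rw [show (∫ u in Ioi (0:ℝ), Complex.exp (-(u:ℂ)) * ((u:ℂ) - (s:ℂ) * Real.log a) ^ k)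
      = s • ∫ v in Ioi (0:ℝ),
          Complex.exp (-((s*v:ℝ):ℂ)) * (((s*v:ℝ):ℂ) - (s:ℂ) * Real.log a) ^ k by
    rw [h, smul_smul, mul_inv_cancel₀ hs.ne', one_smul]]
  have h2 : ∀ v ∈ Ioi (0:ℝ), Complex.exp (-((s*v:ℝ):ℂ)) * (((s*v:ℝ):ℂ) - (s:ℂ) * Real.log a) ^ k
      = (s:ℂ) ^ k * (Complex.exp (-((s:ℂ) * v)) * ((v:ℂ) - Real.log a) ^ k) := by
    intro v hv
    have hv' : (0:ℝ) < v := hv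
    have e1 : ((s*v:ℝ):ℂ) - (s:ℂ) * Real.log a = (s:ℂ) * ((v - Real.log a : ℝ) : ℂ) := by
      push_cast; ring
    have e2 : ((v - Real.log a : ℝ) : ℂ) = (v:ℂ) - Real.log a := by push_cast; ring
    rw [e1, Complex.mul_cpow_ofReal_nonneg hs.le (by linarith), e2]
    push_cast
    ring
  rw [setIntegral_congr_fun measurableSet_Ioi h2, integral_const_mul, ← smul_eq_mul, ← smul_assoc]
  congr 1
  rw [Complex.cpow_add _ _ (by exact_mod_cast hs.ne' : (s:ℂ) ≠ 0), Complex.cpow_one]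
  simp [smul_eq_mul]
  ring
end
private lemma rpow_sandwich {A B x p : ℝ} (hA : 0 < A) (hxA : A ≤ x) (hxB : x ≤ B) :
    x ^ p ≤ (B / A) ^ |p| * A ^ p := by
  have hx : 0 < x := hA.trans_le hxA
  have h1 : x ^ p = (x / A) ^ p * A ^ p := by
    rw [Real.div_rpow hx.le hA.le, div_mul_cancel₀]
    exact (Real.rpow_pos_of_pos hA p).ne'
  have h2 : (x / A) ^ p ≤ (x / A) ^ |p| :=
    Real.rpow_le_rpow_of_exponent_le ((one_le_div hA).mpr hxA) (le_abs_self p)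
  have h3 : (x / A) ^ |p| ≤ (B / A) ^ |p| :=
    Real.rpow_le_rpow (by positivity) (by gcongr) (abs_nonneg p)
  calc x ^ p = (x / A) ^ p * A ^ p := h1
    _ ≤ (B / A) ^ |p| * A ^ p := by
        apply mul_le_mul_of_nonneg_right (h2.trans h3) (Real.rpow_pos_of_pos hA p).le

private lemma cpow_norm_le {w : ℂ} (hw : w ≠ 0) (y : ℂ) :
    ‖w ^ y‖ ≤ ‖w‖ ^ y.re * Real.exp (π * |y.im|) := by
  rw [Complex.norm_cpow_of_ne_zero hw, div_eq_mul_inv, ← Real.exp_neg]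
  apply mul_le_mul_of_nonneg_left _ (Real.rpow_nonneg (norm_nonneg w) _)
  apply Real.exp_le_exp.mpr
  calc -(w.arg * y.im) ≤ |w.arg * y.im| := neg_le_abs _
    _ = |w.arg| * |y.im| := abs_mul _ _
    _ ≤ π * |y.im| := by
        apply mul_le_mul_of_nonneg_right (Complex.abs_arg_le_pi w) (abs_nonneg _)

private lemma I_term_norm_le {L : ℝ} (hL : L < 0) (y : ℂ) {ε R : ℝ} (hε : 0 < ε) {s : ℂ}
    (hs1 : ε ≤ s.re) (hs2 : ‖s‖ ≤ R) {u : ℝ} (hu : 0 < u) :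
    ‖((u:ℂ) - s * L) ^ y‖ ≤
      (Real.exp (π * |y.im|) * (-L * ε) ^ y.re) * ((u + -L * R) / (-L * ε)) ^ |y.re| := by
  set w : ℂ := (u:ℂ) - s * L with hw
  have hA : (0:ℝ) < -L * ε := mul_pos (neg_pos.mpr hL) hε
  have hre : u + -L * ε ≤ w.re := by
    simp only [hw, Complex.sub_re, Complex.ofReal_re, Complex.mul_re, Complex.ofReal_im]
    have : -L * ε ≤ -L * s.re := by nlinarith
    simp only [mul_zero, sub_zero]
    nlinarith
  have hwA : -L * ε ≤ ‖w‖ := by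
    calc -L * ε ≤ u + -L * ε := by linarith
      _ ≤ w.re := hre
      _ ≤ ‖w‖ := Complex.re_le_norm w
  have hwB : ‖w‖ ≤ u + -L * R := by
    calc ‖w‖ ≤ ‖(u:ℂ)‖ + ‖(s * L)‖ := by
          simpa [hw, sub_eq_add_neg] using norm_add_le (u:ℂ) (-(s*L))
      _ = u + ‖s‖ * -L := by
          rw [norm_mul]
          simp [Complex.norm_real, abs_of_pos hu, abs_of_neg hL]
      _ ≤ u + -L * R := by nlinarith [norm_nonneg s]
  have hw0 : w ≠ 0 := by
    intro h
    rw [h] at hwA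
    simp at hwA
    nlinarith
  calc ‖w ^ y‖ ≤ ‖w‖ ^ y.re * Real.exp (π * |y.im|) := cpow_norm_le hw0 y
    _ ≤ ((u + -L * R) / (-L * ε)) ^ |y.re| * (-L * ε) ^ y.re * Real.exp (π * |y.im|) := by
        apply mul_le_mul_of_nonneg_right (rpow_sandwich hA hwA hwB) (Real.exp_nonneg _)
    _ = (Real.exp (π * |y.im|) * (-L * ε) ^ y.re) * ((u + -L * R) / (-L * ε)) ^ |y.re| := by
        ring
section
variable {a : ℝ}

private lemma J_diffOn (ha0 : 0 < a) (ha1 : a < 1) (k : ℂ) :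
    DifferentiableOn ℂ
      (fun s : ℂ => ∫ v in Ioi (0:ℝ), Complex.exp (-(s * v)) * ((v:ℂ) - Real.log a) ^ k)
      {s : ℂ | 0 < s.re} := by
  have hL : Real.log a < 0 := Real.log_neg ha0 ha1
  intro s₀ hs₀
  have hs₀' : (0:ℝ) < s₀.re := hs₀
  set ε : ℝ := s₀.re / 2 with hε
  have hεpos : 0 < ε := half_pos hs₀'
  have key := hasDerivAt_integral_of_dominated_loc_of_deriv_le
    (μ := volume.restrict (Ioi (0:ℝ)))
    (F := fun (s : ℂ) (v : ℝ) => Complex.exp (-(s * v)) * ((v:ℂ) - Real.log a) ^ k)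
    (F' := fun (s : ℂ) (v : ℝ) => -(v:ℂ) * (Complex.exp (-(s * v)) * ((v:ℂ) - Real.log a) ^ k))
    (x₀ := s₀)
    (bound := fun v => Real.exp (-ε * v) * (v + -Real.log a) ^ (k.re + 1))
    (Metric.ball_mem_nhds s₀ hεpos)
    (Filter.Eventually.of_forall fun s =>
      ((J_cont ha0 ha1 k s).aestronglyMeasurable measurableSet_Ioi))
    (J_integrable ha0 ha1 k hs₀')
    (((continuous_ofReal.neg.continuousOn (s := Ioi 0)).mul
      (J_cont ha0 ha1 k s₀)).aestronglyMeasurable measurableSet_Ioi)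
    ?_ (int_master (k.re + 1) hεpos (neg_pos.mpr hL)) ?_
  · exact key.2.differentiableAt.differentiableWithinAt
  · filter_upwards [ae_restrict_mem measurableSet_Ioi] with v hv s hs
    have hv' : (0:ℝ) < v := hv
    have hsre : ε ≤ s.re := by
      have h1 := Complex.abs_re_le_norm (s - s₀)
      have h2 : ‖(s - s₀)‖ < ε := by
        rw [← Complex.dist_eq]; exact Metric.mem_ball.mp hs
      simp only [Complex.sub_re] at h1
      have h3 : |s.re - s₀.re| < ε := lt_of_le_of_lt h1 h2
      rw [abs_lt] at h3
      rw [hε] at *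
      linarith
    rw [norm_mul, J_norm ha0 ha1 k s hv']
    have e1 : ‖-(v:ℂ)‖ = v := by
      rw [norm_neg, Complex.norm_real, Real.norm_eq_abs, abs_of_pos hv']
    rw [e1, Real.rpow_add (by linarith) k.re 1, Real.rpow_one]
    have e2 : Real.exp (-s.re * v) ≤ Real.exp (-ε * v) := by
      apply Real.exp_le_exp.mpr
      nlinarith
    have e3 : (0:ℝ) ≤ (v + -Real.log a) ^ k.re := Real.rpow_nonneg (by linarith) _
    calc v * (Real.exp (-s.re * v) * (v + -Real.log a) ^ k.re)
        ≤ (v + -Real.log a) * (Real.exp (-ε * v) * (v + -Real.log a) ^ k.re) := by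
          apply mul_le_mul (by linarith) (by exact mul_le_mul_of_nonneg_right e2 e3)
            (by positivity) (by linarith)
      _ = Real.exp (-ε * v) * ((v + -Real.log a) ^ k.re * (v + -Real.log a)) := by ring
  · filter_upwards [ae_restrict_mem measurableSet_Ioi] with v hv s _
    have h1 : HasDerivAt (fun s : ℂ => -(s * v)) (-(v:ℂ)) s := by
      exact (((hasDerivAt_id s).mul_const (v:ℂ)).neg).congr_deriv (by simp)
    have h2 := (h1.cexp).mul_const (((v:ℂ) - Real.log a) ^ k)
    exact h2.congr_deriv (by ring)
end
private lemma mem_ball_re {s₀ s : ℂ} {ε : ℝ} (hs : s ∈ Metric.ball s₀ ε) :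
    s₀.re - ε < s.re := by
  have h1 := Complex.abs_re_le_norm (s - s₀)
  have h2 : ‖(s - s₀)‖ < ε := by
    rw [← Complex.dist_eq]; exact Metric.mem_ball.mp hs
  simp only [Complex.sub_re] at h1
  have h3 : |s.re - s₀.re| < ε := lt_of_le_of_lt h1 h2
  rw [abs_lt] at h3
  linarith

private lemma mem_ball_abs {s₀ s : ℂ} {ε : ℝ} (hs : s ∈ Metric.ball s₀ ε) :
    ‖s‖ ≤ ‖s₀‖ + ε := by
  have h2 : ‖(s - s₀)‖ < ε := by
    rw [← Complex.dist_eq]; exact Metric.mem_ball.mp hs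
  calc ‖s‖ = ‖(s - s₀) + s₀‖ := by ring_nf
    _ ≤ ‖(s - s₀)‖ + ‖s₀‖ := norm_add_le _ _
    _ ≤ ‖s₀‖ + ε := by linarith

section
variable {a : ℝ}

private lemma I_base_re (hL : Real.log a < 0) {s : ℂ} (hs : 0 < s.re) {u : ℝ} (hu : 0 < u) :
    0 < ((u:ℂ) - s * Real.log a).re := by
  simp only [Complex.sub_re, Complex.ofReal_re, Complex.mul_re, Complex.ofReal_im, mul_zero,
    sub_zero]
  nlinarith

private lemma I_cont (hL : Real.log a < 0) (k : ℂ) {s : ℂ} (hs : 0 < s.re) :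
    ContinuousOn (fun u : ℝ => Complex.exp (-(u:ℂ)) * ((u:ℂ) - s * Real.log a) ^ k)
      (Ioi 0) := by
  apply ContinuousOn.mul (by fun_prop)
  apply ContinuousOn.cpow (by fun_prop) continuousOn_const
  exact fun u hu => Or.inl (I_base_re hL hs hu)

private lemma I_norm_eq {s : ℂ} (k : ℂ) (u : ℝ) :
    ‖Complex.exp (-(u:ℂ)) * ((u:ℂ) - s * Real.log a) ^ k‖
      = Real.exp (-u) * ‖((u:ℂ) - s * Real.log a) ^ k‖ := by
  rw [norm_mul, Complex.norm_exp]
  simp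

private lemma I_integrable (ha0 : 0 < a) (ha1 : a < 1) (k : ℂ) {s : ℂ} (hs : 0 < s.re) :
    IntegrableOn (fun u : ℝ => Complex.exp (-(u:ℂ)) * ((u:ℂ) - s * Real.log a) ^ k)
      (Ioi 0) := by
  have hL : Real.log a < 0 := Real.log_neg ha0 ha1
  set L := Real.log a
  set A : ℝ := -L * s.re with hA
  have hApos : 0 < A := mul_pos (neg_pos.mpr hL) hs
  set R : ℝ := ‖s‖ with hR
  have hCpos : 0 < -L * R := by
    apply mul_pos (neg_pos.mpr hL)
    exact lt_of_lt_of_le hs (Complex.re_le_norm s)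
  set D : ℝ := Real.exp (π * |k.im|) * A ^ k.re / A ^ |k.re| with hD
  refine Integrable.mono' (((int_master |k.re| one_pos hCpos).const_mul D))
    ((I_cont hL k hs).aestronglyMeasurable measurableSet_Ioi) ?_
  filter_upwards [ae_restrict_mem measurableSet_Ioi] with u hu
  have hu' : (0:ℝ) < u := hu
  rw [I_norm_eq]
  have h1 := I_term_norm_le (ε := s.re) (R := ‖s‖) hL k hs le_rfl le_rfl hu'
  calc Real.exp (-u) * ‖((u:ℂ) - s * L) ^ k‖
      ≤ Real.exp (-u) * ((Real.exp (π * |k.im|) * A ^ k.re) * ((u + -L * R) / A) ^ |k.re|) := by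
        apply mul_le_mul_of_nonneg_left h1 (Real.exp_nonneg _)
    _ = D * (Real.exp (-1 * u) * (u + -L * R) ^ |k.re|) := by
        rw [Real.div_rpow (by linarith) hApos.le, hD]
        field_simp
end
section
variable {a : ℝ}

private lemma I_diffOn (ha0 : 0 < a) (ha1 : a < 1) (k : ℂ) :
    DifferentiableOn ℂ
      (fun s : ℂ => ∫ u in Ioi (0:ℝ), Complex.exp (-(u:ℂ)) * ((u:ℂ) - s * Real.log a) ^ k)
      {s : ℂ | 0 < s.re} := by
  have hL : Real.log a < 0 := Real.log_neg ha0 ha1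
  set L := Real.log a with hLdef
  intro s₀ hs₀
  have hs₀' : (0:ℝ) < s₀.re := hs₀
  set ε : ℝ := s₀.re / 2 with hε
  have hεpos : 0 < ε := half_pos hs₀'
  set R : ℝ := ‖s₀‖ + ε with hR
  set A : ℝ := -L * ε with hA
  have hApos : 0 < A := mul_pos (neg_pos.mpr hL) hεpos
  have hCpos : 0 < -L * R := by
    apply mul_pos (neg_pos.mpr hL)
    have := norm_nonneg s₀
    linarith
  set E : ℝ := Real.exp (π * |k.im|) with hE
  set D : ℝ := ‖k‖ * -L * (E * A ^ (k.re - 1) / A ^ |k.re - 1|) with hD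
  have hkim : (k - 1).im = k.im := by simp
  have hkre : (k - 1).re = k.re - 1 := by simp
  have key := hasDerivAt_integral_of_dominated_loc_of_deriv_le
    (μ := volume.restrict (Ioi (0:ℝ)))
    (F := fun (s : ℂ) (u : ℝ) => Complex.exp (-(u:ℂ)) * ((u:ℂ) - s * L) ^ k)
    (F' := fun (s : ℂ) (u : ℝ) =>
      Complex.exp (-(u:ℂ)) * (k * ((u:ℂ) - s * L) ^ (k - 1) * (-(L:ℂ))))
    (x₀ := s₀)
    (bound := fun u => D * (Real.exp (-1 * u) * (u + -L * R) ^ |k.re - 1|))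
    (Metric.ball_mem_nhds s₀ hεpos) ?_ (I_integrable ha0 ha1 k hs₀') ?_ ?_
    ((int_master |k.re - 1| one_pos hCpos).const_mul D) ?_
  · exact key.2.differentiableAt.differentiableWithinAt
  · filter_upwards [Metric.ball_mem_nhds s₀ hεpos] with s hs
    have hsre : 0 < s.re := by have := mem_ball_re hs; rw [hε] at *; linarith
    exact (I_cont hL k hsre).aestronglyMeasurable measurableSet_Ioi
  · apply ContinuousOn.aestronglyMeasurable _ measurableSet_Ioi
    apply ContinuousOn.mul (by fun_prop)
    apply ContinuousOn.mul _ continuousOn_const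
    apply ContinuousOn.mul continuousOn_const
    apply ContinuousOn.cpow (by fun_prop) continuousOn_const
    exact fun u hu => Or.inl (I_base_re hL hs₀' hu)
  · filter_upwards [ae_restrict_mem measurableSet_Ioi] with u hu s hs
    have hu' : (0:ℝ) < u := hu
    have hsre : ε ≤ s.re := by have := mem_ball_re hs; rw [hε] at *; linarith
    have hsabs : ‖s‖ ≤ R := mem_ball_abs hs
    have h1 := I_term_norm_le (ε := ε) (R := R) hL (k - 1) hεpos hsre hsabs hu'
    rw [hkim, hkre] at h1
    have e0 : ‖Complex.exp (-(u:ℂ)) * (k * ((u:ℂ) - s * L) ^ (k - 1) * (-(L:ℂ)))‖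
        = Real.exp (-u) * (‖k‖ * ‖((u:ℂ) - s * L) ^ (k - 1)‖ * -L) := by
      rw [norm_mul, norm_mul, norm_mul, Complex.norm_exp]
      rw [norm_neg, Complex.norm_real, Real.norm_eq_abs, abs_of_neg hL]
      simp
    rw [e0]
    have habs : (0:ℝ) ≤ ‖k‖ := norm_nonneg k
    calc Real.exp (-u) * (‖k‖ * ‖((u:ℂ) - s * L) ^ (k - 1)‖ * -L)
        ≤ Real.exp (-u) * (‖k‖ * ((E * A ^ (k.re - 1)) * ((u + -L * R) / A)
            ^ |k.re - 1|) * -L) := by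
          apply mul_le_mul_of_nonneg_left _ (Real.exp_nonneg _)
          apply mul_le_mul_of_nonneg_right _ (by linarith)
          exact mul_le_mul_of_nonneg_left h1 habs
      _ = D * (Real.exp (-1 * u) * (u + -L * R) ^ |k.re - 1|) := by
          rw [Real.div_rpow (by linarith) hApos.le, hD]
          have hAne : A ^ |k.re - 1| ≠ 0 := (Real.rpow_pos_of_pos hApos _).ne'
          field_simp
  · filter_upwards [ae_restrict_mem measurableSet_Ioi] with u hu s hs
    have hu' : (0:ℝ) < u := hu
    have hsre : 0 < s.re := by have := mem_ball_re hs; rw [hε] at *; linarith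
    have inner : HasDerivAt (fun s : ℂ => (u:ℂ) - s * L) (-(L:ℂ)) s := by
      simpa using ((hasDerivAt_id s).mul_const (L:ℂ)).const_sub (u:ℂ)
    have h2 := (inner.cpow_const (c := k) (Or.inl (I_base_re hL hsre hu'))).const_mul
      (Complex.exp (-(u:ℂ)))
    exact h2
end
/-- Upper incomplete gamma function: `Γ(s, z) = e^{-z} ∫₀^∞ e^{-t} (t + z)^(s-1) dt`,
with principal-branch complex powers. -/
noncomputable def uGamma (s z : ℂ) : ℂ :=
  Complex.exp (-z) * ∫ t in Set.Ioi (0:ℝ), Complex.exp (-(t:ℂ)) * ((t:ℂ) + z) ^ (s - 1)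

section
variable {a : ℝ}

private lemma I_eq_J (ha0 : 0 < a) (ha1 : a < 1) (k : ℂ) {s : ℂ} (hs : 0 < s.re) :
    (∫ u in Ioi (0:ℝ), Complex.exp (-(u:ℂ)) * ((u:ℂ) - s * Real.log a) ^ k)
    = s ^ (k + 1) * ∫ v in Ioi (0:ℝ), Complex.exp (-(s * v)) * ((v:ℂ) - Real.log a) ^ k := by
  set U : Set ℂ := {s : ℂ | 0 < s.re} with hU
  have hUopen : IsOpen U := isOpen_lt continuous_const Complex.continuous_re
  have hUpre : IsPreconnected U := (convex_halfSpace_re_gt 0).isPreconnected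
  have hf : AnalyticOnNhd ℂ
      (fun s : ℂ => ∫ u in Ioi (0:ℝ), Complex.exp (-(u:ℂ)) * ((u:ℂ) - s * Real.log a) ^ k) U :=
    (I_diffOn ha0 ha1 k).analyticOnNhd hUopen
  have hg : AnalyticOnNhd ℂ
      (fun s : ℂ => s ^ (k + 1) *
        ∫ v in Ioi (0:ℝ), Complex.exp (-(s * v)) * ((v:ℂ) - Real.log a) ^ k) U := by
    apply DifferentiableOn.analyticOnNhd _ hUopen
    apply DifferentiableOn.mul _ (J_diffOn ha0 ha1 k)
    intro z hz
    exact ((hasDerivAt_id z).cpow_const (c := k + 1) (Or.inl hz)).differentiableAt.differentiableWithinAt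
  have h1 : (1:ℂ) ∈ U := by simp [hU]
  have freq : ∃ᶠ z in nhdsWithin (1:ℂ) {(1:ℂ)}ᶜ,
      (fun s : ℂ => ∫ u in Ioi (0:ℝ), Complex.exp (-(u:ℂ)) * ((u:ℂ) - s * Real.log a) ^ k) z
      = (fun s : ℂ => s ^ (k + 1) *
          ∫ v in Ioi (0:ℝ), Complex.exp (-(s * v)) * ((v:ℂ) - Real.log a) ^ k) z := by
    have hseq : Filter.Tendsto (fun n : ℕ => ((1 + 1/(n+1) : ℝ) : ℂ)) Filter.atTop
        (nhdsWithin (1:ℂ) {(1:ℂ)}ᶜ) := by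
      rw [tendsto_nhdsWithin_iff]
      constructor
      · have : Filter.Tendsto (fun n : ℕ => (1 + 1/(n+1) : ℝ)) Filter.atTop (nhds 1) := by
          simpa using tendsto_const_nhds.add (tendsto_one_div_add_atTop_nhds_zero_nat (𝕜 := ℝ))
        have := (Complex.continuous_ofReal.tendsto (1:ℝ)).comp this
        simpa [Function.comp_def] using this
      · filter_upwards with n
        simp only [Set.mem_compl_iff, Set.mem_singleton_iff]
        intro h
        have : (1 + 1/(n+1) : ℝ) = 1 := by exact_mod_cast h
        have hn : (0:ℝ) < 1/(n+1) := by positivity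
        linarith
    apply hseq.frequently
    apply Filter.Eventually.frequently
    filter_upwards with n
    have hpos : (0:ℝ) < 1 + 1/(n+1) := by positivity
    exact I_eq_J_real ha0 ha1 k hpos
  exact hf.eqOn_of_preconnected_of_frequently_eq hg hUpre h1 freq hs

private lemma term_eq (ha0 : 0 < a) (ha1 : a < 1) (k : ℂ) {s : ℂ} (hs : 0 < s.re) :
    (∫ t in Ioo (0:ℝ) 1, (t:ℂ) ^ (s - 1) * (-(Complex.log ((a:ℂ) * (t:ℂ)))) ^ k)
    = uGamma (1 + k) (-(s * Complex.log (a:ℂ))) / ((a:ℂ) ^ s * s ^ (k + 1)) := by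
  have hL : Real.log a < 0 := Real.log_neg ha0 ha1
  have hs0 : s ≠ 0 := fun h => by simp [h] at hs
  have hlog : Complex.log (a:ℂ) = ((Real.log a : ℝ) : ℂ) := (Complex.ofReal_log ha0.le).symm
  have ha0' : (a:ℂ) ≠ 0 := Complex.ofReal_ne_zero.mpr ha0.ne'
  have hGamma : uGamma (1 + k) (-(s * Complex.log (a:ℂ)))
      = Complex.exp (s * Complex.log (a:ℂ)) *
        ∫ u in Ioi (0:ℝ), Complex.exp (-(u:ℂ)) * ((u:ℂ) - s * Real.log a) ^ k := by
    rw [uGamma, neg_neg]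
    congr 1
    refine setIntegral_congr_fun measurableSet_Ioi (fun u _ => ?_)
    rw [hlog]
    ring_nf
  have has : (a:ℂ) ^ s = Complex.exp (s * Complex.log (a:ℂ)) := by
    rw [Complex.cpow_def_of_ne_zero ha0', mul_comm]
  have hsk : s ^ (k + 1) ≠ 0 := by
    rw [Complex.cpow_def_of_ne_zero hs0]
    exact Complex.exp_ne_zero _
  rw [subst_eq ha0 k s, hGamma, has, I_eq_J ha0 ha1 k hs]
  rw [mul_comm ((s:ℂ) ^ (k+1)) _] at *
  field_simp [Complex.exp_ne_zero]
end

theorem stmt0 (a : ℝ) (ha0 : 0 < a) (ha1 : a < 1) (b c k m : ℂ)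
    (hb : 0 < b.re) (hm : 0 < m.re) (hc : ‖c‖ < 1) :
    (∫ t in (0:ℝ)..1, (t:ℂ) ^ (m - 1) * (-(Complex.log ((a:ℂ) * (t:ℂ)))) ^ k
        / (1 + c * (t:ℂ) ^ b))
    = ∑' j : ℕ, (-c) ^ j * uGamma (1 + k) (-((b * (j:ℂ) + m) * Complex.log (a:ℂ)))
        / ((a:ℂ) ^ (b * (j:ℂ) + m) * (b * (j:ℂ) + m) ^ (k + 1)) := by
  have hL : Real.log a < 0 := Real.log_neg ha0 ha1
  have hsre : ∀ j : ℕ, 0 < (b * (j:ℂ) + m).re := by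
    intro j
    have : (b * (j:ℂ) + m).re = b.re * (j:ℝ) + m.re := by
      simp [Complex.add_re, Complex.mul_re]
    rw [this]
    have : (0:ℝ) ≤ b.re * (j:ℝ) := by positivity
    linarith
  set f : ℕ → ℝ → ℂ := fun j t =>
    (-c) ^ j * ((t:ℂ) ^ (b * (j:ℂ) + m - 1) * (-(Complex.log ((a:ℂ) * (t:ℂ)))) ^ k) with hf
  have hint : ∀ j : ℕ, IntegrableOn (f j) (Ioo (0:ℝ) 1) := by
    intro j
    apply Integrable.const_mul
    exact (subst_int_iff ha0 k (b * (j:ℂ) + m)).mpr (J_integrable ha0 ha1 k (hsre j))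
  -- pointwise geometric series expansion
  have key : ∀ t ∈ Ioo (0:ℝ) 1,
      (t:ℂ) ^ (m - 1) * (-(Complex.log ((a:ℂ) * (t:ℂ)))) ^ k / (1 + c * (t:ℂ) ^ b)
      = ∑' j : ℕ, f j t := by
    intro t ht
    obtain ⟨ht0, ht1⟩ := ht
    have htC : (t:ℂ) ≠ 0 := Complex.ofReal_ne_zero.mpr ht0.ne'
    have hxn : ‖-(c * (t:ℂ) ^ b)‖ < 1 := by
      rw [norm_neg, norm_mul]
      calc ‖c‖ * ‖(t:ℂ) ^ b‖ ≤ ‖c‖ * 1 := by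
            apply mul_le_mul_of_nonneg_left _ (norm_nonneg c)
            rw [Complex.norm_cpow_eq_rpow_re_of_pos ht0]
            exact Real.rpow_le_one ht0.le ht1.le hb.le
        _ ≤ ‖c‖ := by simp
        _ < 1 := hc
    have hgeom := tsum_geometric_of_norm_lt_one hxn
    have hne : 1 + c * (t:ℂ) ^ b = 1 - -(c * (t:ℂ) ^ b) := by ring
    rw [hne, div_eq_mul_inv, ← hgeom, ← tsum_mul_left]
    congr 1
    funext j
    have e1 : (t:ℂ) ^ (b * (j:ℂ) + m - 1) = ((t:ℂ) ^ b) ^ j * (t:ℂ) ^ (m - 1) := by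
      rw [show b * (j:ℂ) + m - 1 = (j:ℕ) * b + (m - 1) by push_cast; ring,
        Complex.cpow_add _ _ htC, Complex.cpow_nat_mul]
    rw [hf]
    simp only
    rw [e1, show -(c * (t:ℂ) ^ b) = (-c) * (t:ℂ) ^ b by ring, mul_pow]
    ring
  have hnormj : ∀ j : ℕ, ∀ t ∈ Ioo (0:ℝ) 1,
      ‖f j t‖ ≤ ‖c‖ ^ j * ‖(t:ℂ) ^ (m - 1) * (-(Complex.log ((a:ℂ) * (t:ℂ)))) ^ k‖ := by
    intro j t ht
    obtain ⟨ht0, ht1⟩ := ht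
    rw [hf]
    simp only [norm_mul, norm_pow, norm_neg]
    have e2 : ‖(t:ℂ) ^ (b * (j:ℂ) + m - 1)‖ ≤ ‖(t:ℂ) ^ (m - 1)‖ := by
      rw [Complex.norm_cpow_eq_rpow_re_of_pos ht0, Complex.norm_cpow_eq_rpow_re_of_pos ht0]
      apply Real.rpow_le_rpow_of_exponent_ge ht0 ht1.le
      have : (b * (j:ℂ) + m - 1).re = b.re * (j:ℝ) + m.re - 1 := by
        simp [Complex.add_re, Complex.sub_re, Complex.mul_re]
      rw [this]
      have h1 : (0:ℝ) ≤ b.re * (j:ℝ) := by positivity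
      have : (m - 1).re = m.re - 1 := by simp
      rw [this]
      linarith
    exact mul_le_mul_of_nonneg_left
      (mul_le_mul_of_nonneg_right e2 (norm_nonneg _)) (by positivity)
  have hM : IntegrableOn
      (fun t : ℝ => ‖(t:ℂ) ^ (m - 1) * (-(Complex.log ((a:ℂ) * (t:ℂ)))) ^ k‖)
      (Ioo (0:ℝ) 1) := by
    apply Integrable.norm
    have := (subst_int_iff ha0 k m).mpr (J_integrable ha0 ha1 k hm)
    exact this
  have hsum : Summable (fun j : ℕ =>
      ∫ t in Ioo (0:ℝ) 1, ‖f j t‖) := by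
    apply Summable.of_nonneg_of_le
      (fun j => integral_nonneg (fun t => norm_nonneg _))
      (fun j => ?_)
      (((summable_geometric_of_lt_one (norm_nonneg c) hc)).mul_right
        (∫ t in Ioo (0:ℝ) 1, ‖(t:ℂ) ^ (m - 1) * (-(Complex.log ((a:ℂ) * (t:ℂ)))) ^ k‖))
    rw [← integral_const_mul]
    apply setIntegral_mono_on (hint j).norm (hM.const_mul _) measurableSet_Ioo
    exact fun t ht => hnormj j t ht
  -- main computation
  rw [intervalIntegral.integral_of_le zero_le_one, integral_Ioc_eq_integral_Ioo,
    setIntegral_congr_fun measurableSet_Ioo key,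
    ← integral_tsum_of_summable_integral_norm hint hsum]
  congr 1
  funext j
  rw [hf]
  simp only
  rw [integral_const_mul, show b * (j:ℂ) + m - 1 = (b * (j:ℂ) + m) - 1 by ring,
    term_eq ha0 ha1 k (hsre j), mul_div_assoc]
end

section
/- Let n ∈ ℕ with n ≥ 2, let b, q ∈ ℝ with b > 0 and q > 0, let m ∈ ℝ with m > −1, and let c ∈ ℂ with ‖c‖ < 1. Then ∫₀¹ x^m (log x)^n / ((1 + c x^b)(q² + (log x)²)) dx = (n−1)! · Σ_{j=0}^∞ (1/2) (−c)^j e^{−i(1+bj+m)q} (1+bj+m) ((1+bj+m)² q²)^{−n} · [ (−i q)^n (−i(1+bj+m)q)^n E_n(−i(1+bj+m)q) + e^{2i(1+bj+m)q} (i q)^n (i(1+bj+m)q)^n E_n(i(1+bj+m)q) ]. -/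
open MeasureTheory Set

/-- Generalized exponential integral: `E_n(z) = ∫₁^∞ e^{-z t} t^{-n} dt`,
with the principal-branch complex power `t^{-n}`. -/
noncomputable def expE (n : ℕ) (z : ℂ) : ℂ :=
  ∫ t in Set.Ioi (1:ℝ), Complex.exp (-z * (t:ℂ)) * (t:ℂ) ^ (-(n:ℂ))

lemma image_exp_neg : (fun t : ℝ => Real.exp (-t)) '' Set.Ioi 0 = Set.Ioo 0 1 := by
  ext x
  constructor
  · rintro ⟨t, ht, rfl⟩
    exact ⟨Real.exp_pos _, Real.exp_lt_one_iff.mpr (by simpa using ht)⟩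
  · rintro ⟨h0, h1⟩
    exact ⟨-Real.log x, by simpa using Real.log_neg h0 h1, by simp [Real.exp_log h0]⟩

lemma integrable_exp_complex {z : ℂ} (hz : 0 < z.re) :
    IntegrableOn (fun u : ℝ => Complex.exp (-(z*u))) (Set.Ioi 0) := by
  apply Integrable.mono' (exp_neg_integrableOn_Ioi 0 hz)
  · exact (Complex.continuous_exp.comp (by continuity)).aestronglyMeasurable
  · filter_upwards with u
    simp [Complex.norm_exp, mul_comm]

lemma integral_exp_complex {z : ℂ} (hz : 0 < z.re) :
    ∫ u in Set.Ioi (0:ℝ), Complex.exp (-(z*u)) = 1/z := by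
  have hz0 : z ≠ 0 := fun h => by simp [h] at hz
  have := integral_Ioi_of_hasDerivAt_of_tendsto' (a := 0) (m := 0)
    (f := fun u : ℝ => -Complex.exp (-(z*u))/z)
    (f' := fun u : ℝ => Complex.exp (-(z*u)))
    (fun x _ => ?_) (integrable_exp_complex hz) ?_
  · rw [this]; simp; rw [neg_div, neg_neg, one_div]
  · have h1 : HasDerivAt (fun u : ℝ => -(z*u)) (-z) x := by
      exact ((hasDerivAt_id x).ofReal_comp.const_mul z).neg.congr_deriv (by simp)
    have := (h1.cexp).neg.div_const z
    refine this.congr_deriv ?_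
    rw [mul_neg, neg_neg, mul_div_assoc, div_self hz0, mul_one]
  · rw [show (0:ℂ) = 0/z by simp]
    apply Filter.Tendsto.div_const
    rw [show (0:ℂ) = -0 by simp]
    apply Filter.Tendsto.neg
    rw [tendsto_zero_iff_norm_tendsto_zero]
    have : (fun u : ℝ => ‖Complex.exp (-(z*u))‖) = fun u => Real.exp (-z.re * u) := by
      funext u; simp [Complex.norm_exp, mul_comm]
    rw [this]
    exact Real.tendsto_exp_atBot.comp (by
      exact Filter.Tendsto.const_mul_atTop_of_neg (neg_neg_iff_pos.mpr hz) Filter.tendsto_id)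

lemma integrableOn_pow_exp (k : ℕ) {r : ℝ} (hr : 0 < r) :
    IntegrableOn (fun t : ℝ => t^k * Real.exp (-(r*t))) (Set.Ioi 0) := by
  have := integrableOn_rpow_mul_exp_neg_mul_rpow (p := 1) (s := k) (b := r)
    (by exact lt_of_lt_of_le neg_one_lt_zero (Nat.cast_nonneg k)) zero_lt_one hr
  apply this.congr_fun ?_ measurableSet_Ioi
  intro x hx
  simp [Real.rpow_natCast, neg_mul]

lemma integral_pow_exp (k : ℕ) {r : ℝ} (hr : 0 < r) :
    ∫ t in Set.Ioi (0:ℝ), (t:ℂ)^k * Complex.exp (-(r*t)) = (Nat.factorial k) / (r:ℂ)^(k+1) := by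
  have h := Complex.integral_cpow_mul_exp_neg_mul_Ioi (a := ((k+1 : ℕ) : ℂ)) (r := r) (by simp; positivity) hr
  have h2 : ∀ t ∈ Set.Ioi (0:ℝ), (t:ℂ) ^ (((k+1:ℕ):ℂ) - 1) * Complex.exp (-(r*t))
      = (t:ℂ)^k * Complex.exp (-(r*t)) := by
    intro t ht
    congr 1
    rw [show (((k+1:ℕ):ℂ) - 1) = (k:ℂ) by push_cast; ring, Complex.cpow_natCast]
  rw [setIntegral_congr_fun measurableSet_Ioi h2] at h
  rw [h]
  have hrne : (r:ℂ) ≠ 0 := by exact_mod_cast hr.ne'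
  rw [show ((k+1:ℕ):ℂ) = ((k:ℂ)+1) by push_cast; ring, Complex.Gamma_nat_eq_factorial,
    show ((k:ℂ)+1) = ((k+1:ℕ):ℂ) by push_cast; ring, Complex.cpow_natCast]
  field_simp
  rw [one_div, inv_pow]
  field_simp

lemma image_add_one : (fun u : ℝ => u + 1) '' Set.Ioi 0 = Set.Ioi 1 := by
  ext x
  simp only [mem_image, mem_Ioi]
  constructor
  · rintro ⟨u, hu, rfl⟩; linarith
  · intro h; exact ⟨x - 1, by linarith, by ring⟩

lemma expE_shift (n : ℕ) (z : ℂ) :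
    Complex.exp z * expE n z
      = ∫ u in Set.Ioi (0:ℝ), Complex.exp (-(z*u)) * (((1+u : ℝ):ℂ)^n)⁻¹ := by
  have him := integral_image_eq_integral_abs_deriv_smul (s := Set.Ioi 0)
    (f := fun u : ℝ => u + 1) (f' := fun _ => (1:ℝ)) measurableSet_Ioi
    (fun x _ => by simpa using ((hasDerivAt_id x).add_const (1:ℝ)).hasDerivWithinAt)
    (fun x _ y _ h => by simpa using h)
    (fun t => Complex.exp z * (Complex.exp (-z * (t:ℂ)) * (t:ℂ) ^ (-(n:ℂ))))
  rw [expE, ← integral_const_mul, ← image_add_one, him]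
  apply setIntegral_congr_fun measurableSet_Ioi
  intro u hu
  have hu0 : (0:ℝ) < u := hu
  have h1u : (0:ℝ) < u + 1 := by linarith
  simp only [abs_one, one_smul]
  rw [show ((u+1:ℝ):ℂ) ^ (-(n:ℂ)) = (((u+1:ℝ):ℂ)^n)⁻¹ by
    rw [Complex.cpow_neg, Complex.cpow_natCast]]
  rw [show ((1+u:ℝ):ℂ) = ((u+1:ℝ):ℂ) by push_cast; ring]
  rw [← mul_assoc, ← Complex.exp_add]
  congr 2
  push_cast
  ring

lemma integral_exp_real {r : ℝ} (hr : 0 < r) :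
    ∫ u in Set.Ioi (0:ℝ), Real.exp (-(r*u)) = 1/r := by
  have h := MeasureTheory.integral_comp_mul_left_Ioi (fun x => Real.exp (-x)) 0 hr
  simp only [mul_zero, integral_exp_neg_Ioi_zero, smul_eq_mul, mul_one] at h
  rw [h, one_div]

lemma exp_split (P : ℂ) {X Y X' Y' : ℂ} (h : X + Y = X' + Y') :
    P * Complex.exp X * Complex.exp Y = P * Complex.exp X' * Complex.exp Y' := by
  rw [mul_assoc, ← Complex.exp_add, mul_assoc, ← Complex.exp_add, h]

lemma key_fubini (n : ℕ) (hn : 2 ≤ n) {a : ℝ} (ha : 0 < a) {w : ℂ} (hw : w.re = 0)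
    (hw0 : w ≠ 0) :
    ∫ t in Set.Ioi (0:ℝ), (t:ℂ)^(n-1) * Complex.exp (-((a:ℝ)*t)) / ((t:ℂ) + w)
      = (Nat.factorial (n-1)) * (a:ℂ)^(1-(n:ℤ))
          * (Complex.exp ((a:ℂ)*w) * expE n ((a:ℂ)*w)) := by
  have ha0 : (a:ℂ) ≠ 0 := by exact_mod_cast ha.ne'
  set F : ℝ → ℝ → ℂ := fun t u =>
    (a:ℂ) * (t:ℂ)^(n-1) * Complex.exp (-(((a:ℂ)*(1+(u:ℂ))) * t))
      * Complex.exp (-((a:ℂ)*w)*u) with hF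
  have htw : ∀ t : ℝ, t ∈ Set.Ioi (0:ℝ) → (t:ℂ) + w ≠ 0 := by
    intro t ht h0
    have : ((t:ℂ) + w).re = t := by simp [hw]
    rw [h0] at this
    simp at this
    exact (mem_Ioi.mp ht).ne this
  -- split F in two ways
  have hsplit1 : ∀ t u : ℝ, F t u
      = ((a:ℂ) * (t:ℂ)^(n-1) * Complex.exp (-((a:ℂ)*t)))
          * Complex.exp (-(((a:ℂ)*((t:ℂ)+w))*u)) := by
    intro t u
    have hexp : Complex.exp (-(((a:ℂ)*(1+(u:ℂ))) * t)) * Complex.exp (-((a:ℂ)*w)*u)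
        = Complex.exp (-((a:ℂ)*t)) * Complex.exp (-(((a:ℂ)*((t:ℂ)+w))*u)) := by
      rw [← Complex.exp_add, ← Complex.exp_add]
      congr 1
      ring
    rw [hF]
    dsimp only
    rw [mul_assoc, hexp, ← mul_assoc]
  have hsplit2 : ∀ t u : ℝ, F t u
      = ((a:ℂ) * Complex.exp (-((a:ℂ)*w)*u))
          * ((t:ℂ)^(n-1) * Complex.exp (-(((a*(1+u):ℝ):ℂ)*t))) := by
    intro t u
    rw [hF]
    dsimp only
    push_cast
    ring
  -- inner integral in u
  have step1 : ∀ t ∈ Set.Ioi (0:ℝ), (∫ u in Set.Ioi (0:ℝ), F t u)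
      = (t:ℂ)^(n-1) * Complex.exp (-((a:ℝ)*t)) / ((t:ℂ) + w) := by
    intro t ht
    have ht0 : (0:ℝ) < t := ht
    have hzre : 0 < ((a:ℂ)*((t:ℂ)+w)).re := by
      simp [Complex.mul_re, hw]
      positivity
    calc (∫ u in Set.Ioi (0:ℝ), F t u)
        = ∫ u in Set.Ioi (0:ℝ), ((a:ℂ) * (t:ℂ)^(n-1) * Complex.exp (-((a:ℂ)*t)))
            * Complex.exp (-(((a:ℂ)*((t:ℂ)+w))*u)) := by
          exact setIntegral_congr_fun measurableSet_Ioi (fun u _ => hsplit1 t u)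
      _ = ((a:ℂ) * (t:ℂ)^(n-1) * Complex.exp (-((a:ℂ)*t)))
            * (1/((a:ℂ)*((t:ℂ)+w))) := by
          rw [integral_const_mul, integral_exp_complex hzre]
      _ = (t:ℂ)^(n-1) * Complex.exp (-((a:ℝ)*t)) / ((t:ℂ) + w) := by
          field_simp [htw t ht]
  -- inner integral in t
  have step2 : ∀ u ∈ Set.Ioi (0:ℝ), (∫ t in Set.Ioi (0:ℝ), F t u)
      = ((Nat.factorial (n-1)) * (a:ℂ)^(1-(n:ℤ)))
          * (Complex.exp (-((a:ℂ)*w)*u) * (((1+u:ℝ):ℂ)^n)⁻¹) := by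
    intro u hu
    have hu0 : (0:ℝ) < u := hu
    have hr : 0 < a*(1+u) := by positivity
    have h1u : ((1+u:ℝ):ℂ) ≠ 0 := by
      exact_mod_cast (by positivity : (0:ℝ) < 1+u).ne'
    calc (∫ t in Set.Ioi (0:ℝ), F t u)
        = ∫ t in Set.Ioi (0:ℝ), ((a:ℂ) * Complex.exp (-((a:ℂ)*w)*u))
            * ((t:ℂ)^(n-1) * Complex.exp (-(((a*(1+u):ℝ):ℂ)*t))) := by
          exact setIntegral_congr_fun measurableSet_Ioi (fun t _ => hsplit2 t u)
      _ = ((a:ℂ) * Complex.exp (-((a:ℂ)*w)*u))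
            * ((Nat.factorial (n-1)) / ((a*(1+u):ℝ):ℂ)^(n-1+1)) := by
          rw [integral_const_mul, integral_pow_exp (n-1) hr]
      _ = ((Nat.factorial (n-1)) * (a:ℂ)^(1-(n:ℤ)))
          * (Complex.exp (-((a:ℂ)*w)*u) * (((1+u:ℝ):ℂ)^n)⁻¹) := by
          rw [show n - 1 + 1 = n by omega]
          rw [show ((a*(1+u):ℝ):ℂ) = (a:ℂ) * ((1+u:ℝ):ℂ) by push_cast; ring, mul_pow]
          rw [show (1-(n:ℤ)) = 1 + (-(n:ℤ)) by ring, zpow_add₀ ha0, zpow_neg, zpow_natCast,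
            zpow_one]
          field_simp
  -- measurability
  have hmeas : AEStronglyMeasurable (Function.uncurry F)
      ((volume.restrict (Set.Ioi (0:ℝ))).prod (volume.restrict (Set.Ioi (0:ℝ)))) := by
    apply Continuous.aestronglyMeasurable
    apply Continuous.mul
    apply Continuous.mul
    · exact continuous_const.mul ((Complex.continuous_ofReal.comp continuous_fst).pow _)
    · exact Complex.continuous_exp.comp (by fun_prop)
    · exact Complex.continuous_exp.comp (by fun_prop)
  -- integrability on the product
  have hint : Integrable (Function.uncurry F)
      ((volume.restrict (Set.Ioi (0:ℝ))).prod (volume.restrict (Set.Ioi (0:ℝ)))) := by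
    rw [integrable_prod_iff hmeas]
    constructor
    · filter_upwards [ae_restrict_mem measurableSet_Ioi] with t ht
      have ht0 : (0:ℝ) < t := ht
      have hzre : 0 < ((a:ℂ)*((t:ℂ)+w)).re := by
        simp [Complex.mul_re, hw]
        positivity
      have := ((integrable_exp_complex hzre).const_mul
        ((a:ℂ) * (t:ℂ)^(n-1) * Complex.exp (-((a:ℂ)*t))))
      exact this.congr (Filter.Eventually.of_forall (fun u => (hsplit1 t u).symm))
    · -- the norm integral
      have hnorm : ∀ t ∈ Set.Ioi (0:ℝ),
          (∫ u in Set.Ioi (0:ℝ), ‖F t u‖) = t^(n-2) * Real.exp (-(a*t)) := by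
        intro t ht
        have ht0 : (0:ℝ) < t := ht
        have hF2 : ∀ u ∈ Set.Ioi (0:ℝ), ‖F t u‖
            = (a * t^(n-1) * Real.exp (-(a*t))) * Real.exp (-((a*t)*u)) := by
          intro u hu
          rw [hsplit1]
          have h1 : (-((a:ℂ)*t)).re = -(a*t) := by simp
          have h2 : (-(((a:ℂ)*((t:ℂ)+w))*u)).re = -((a*t)*u) := by
            simp [Complex.mul_re, Complex.add_re, hw, Complex.add_im]
          simp only [norm_mul, Complex.norm_exp, h1, h2, norm_pow,
            Complex.norm_real, Real.norm_eq_abs, abs_of_pos ha, abs_of_pos (show (0:ℝ) < t from ht)]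
        rw [setIntegral_congr_fun measurableSet_Ioi hF2, integral_const_mul,
          integral_exp_real (by positivity : (0:ℝ) < a*t)]
        rw [show n-1 = (n-2)+1 by omega, pow_succ]
        field_simp
      apply Integrable.congr ((integrableOn_pow_exp (n-2) ha) : Integrable _ _)
      filter_upwards [ae_restrict_mem measurableSet_Ioi] with t ht
      exact (hnorm t ht).symm
  calc ∫ t in Set.Ioi (0:ℝ), (t:ℂ)^(n-1) * Complex.exp (-((a:ℝ)*t)) / ((t:ℂ) + w)
      = ∫ t in Set.Ioi (0:ℝ), ∫ u in Set.Ioi (0:ℝ), F t u :=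
        (setIntegral_congr_fun measurableSet_Ioi step1).symm
    _ = ∫ u in Set.Ioi (0:ℝ), ∫ t in Set.Ioi (0:ℝ), F t u := integral_integral_swap hint
    _ = ∫ u in Set.Ioi (0:ℝ), ((Nat.factorial (n-1)) * (a:ℂ)^(1-(n:ℤ)))
          * (Complex.exp (-((a:ℂ)*w)*u) * (((1+u:ℝ):ℂ)^n)⁻¹) :=
        setIntegral_congr_fun measurableSet_Ioi step2
    _ = _ := by
        simp_rw [neg_mul]
        rw [integral_const_mul, ← expE_shift]

lemma norm_le_add_imag {w : ℂ} (hw : w.re = 0) (t : ℝ) : ‖w‖ ≤ ‖(t:ℂ) + w‖ := by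
  rw [Complex.norm_def, Complex.norm_def]
  apply Real.sqrt_le_sqrt
  simp [Complex.normSq_apply, hw]
  nlinarith [sq_nonneg t]

lemma integrableOn_pow_exp_div (k : ℕ) {a : ℝ} (ha : 0 < a) {w : ℂ} (hw : w.re = 0)
    (hw0 : w ≠ 0) :
    IntegrableOn (fun t : ℝ => (t:ℂ)^k * Complex.exp (-((a:ℝ)*t)) / ((t:ℂ) + w))
      (Set.Ioi 0) := by
  have hwpos : 0 < ‖w‖ := norm_pos_iff.mpr hw0
  apply Integrable.mono' (((integrableOn_pow_exp k ha).mul_const (‖w‖⁻¹)))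
  · apply Measurable.aestronglyMeasurable
    fun_prop
  · filter_upwards [ae_restrict_mem measurableSet_Ioi] with t ht
    have ht0 : (0:ℝ) < t := ht
    have hb : ‖(t:ℂ)^k * Complex.exp (-((a:ℝ)*t)) / ((t:ℂ)+w)‖
        = t^k * Real.exp (-(a*t)) / ‖(t:ℂ)+w‖ := by
      rw [norm_div, norm_mul, norm_pow, Complex.norm_real, Real.norm_of_nonneg ht0.le,
        Complex.norm_exp]
      norm_num
    have h3 : (1:ℝ) ≤ ‖w‖⁻¹ * ‖(t:ℂ)+w‖ := by
      calc (1:ℝ) = ‖w‖⁻¹ * ‖w‖ := (inv_mul_cancel₀ hwpos.ne').symm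
        _ ≤ ‖w‖⁻¹ * ‖(t:ℂ)+w‖ :=
            mul_le_mul_of_nonneg_left (norm_le_add_imag hw t) (by positivity)
    rw [hb, div_le_iff₀ (lt_of_lt_of_le hwpos (norm_le_add_imag hw t))]
    calc t^k * Real.exp (-(a*t)) = t^k * Real.exp (-(a*t)) * 1 := by ring
      _ ≤ t^k * Real.exp (-(a*t)) * (‖w‖⁻¹ * ‖(t:ℂ)+w‖) :=
          mul_le_mul_of_nonneg_left h3 (by positivity)
      _ = t^k * Real.exp (-(a*t)) * ‖w‖⁻¹ * ‖(t:ℂ)+w‖ := by ring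

lemma integral_I (n : ℕ) (hn : 2 ≤ n) {a q : ℝ} (ha : 0 < a) (hq : 0 < q) :
    ∫ t in Set.Ioi (0:ℝ), (t:ℂ)^n * Complex.exp (-((a:ℝ)*t)) / ((q:ℂ)^2 + (t:ℂ)^2)
      = (Nat.factorial (n-1)) * ((1/2 : ℂ) * (a:ℂ)^(1-(n:ℤ)) *
          (Complex.exp (-Complex.I * (a:ℂ) * (q:ℂ)) * expE n (-Complex.I * (a:ℂ) * (q:ℂ))
           + Complex.exp (Complex.I * (a:ℂ) * (q:ℂ)) * expE n (Complex.I * (a:ℂ) * (q:ℂ)))) := by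
  have hq0 : (q:ℂ) ≠ 0 := by exact_mod_cast hq.ne'
  have hw1 : (Complex.I * q).re = 0 := by simp
  have hw2 : (-(Complex.I * q)).re = 0 := by simp
  have hw10 : Complex.I * q ≠ 0 := by simp [Complex.I_ne_zero, hq0]
  have hw20 : -(Complex.I * q) ≠ 0 := by simp [Complex.I_ne_zero, hq0]
  have hpoint : ∀ t ∈ Set.Ioi (0:ℝ),
      (t:ℂ)^n * Complex.exp (-((a:ℝ)*t)) / ((q:ℂ)^2 + (t:ℂ)^2)
      = (1/2 : ℂ) * ((t:ℂ)^(n-1) * Complex.exp (-((a:ℝ)*t)) / ((t:ℂ) + Complex.I*q)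
          + (t:ℂ)^(n-1) * Complex.exp (-((a:ℝ)*t)) / ((t:ℂ) + -(Complex.I*q))) := by
    intro t ht
    have ht0 : (0:ℝ) < t := ht
    have h1 : (t:ℂ) + Complex.I*q ≠ 0 := by
      intro h
      have := congrArg Complex.im h
      simp at this
      exact hq.ne' this
    have h2 : (t:ℂ) + -(Complex.I*q) ≠ 0 := by
      intro h
      have := congrArg Complex.im h
      simp at this
      exact hq.ne' this
    have hqt : (q:ℂ)^2 + (t:ℂ)^2 = ((t:ℂ) + Complex.I*q) * ((t:ℂ) + -(Complex.I*q)) := by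
      linear_combination (q:ℂ)^2 * Complex.I_sq
    have htn : (t:ℂ)^n = (t:ℂ)^(n-1) * t := by
      rw [← pow_succ, show n-1+1 = n by omega]
    rw [hqt, htn]
    have ht0' : ((q:ℂ)^2 + (t:ℂ)^2) ≠ 0 := by rw [hqt]; exact mul_ne_zero h1 h2
    field_simp
    ring
  rw [setIntegral_congr_fun measurableSet_Ioi hpoint, integral_const_mul,
    integral_add (integrableOn_pow_exp_div (n-1) ha hw1 hw10)
      (integrableOn_pow_exp_div (n-1) ha hw2 hw20),
    key_fubini n hn ha hw1 hw10, key_fubini n hn ha hw2 hw20]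
  rw [show (a:ℂ) * (Complex.I*q) = Complex.I * a * q by ring,
    show (a:ℂ) * (-(Complex.I*q)) = -Complex.I * a * q by ring]
  ring

lemma term_simp (n : ℕ) {a q : ℝ} (ha : 0 < a) (hq : 0 < q) (cj : ℂ) :
    (1/2 : ℂ) * cj * Complex.exp (-Complex.I * (a:ℂ) * (q:ℂ)) * (a:ℂ)
      * ((a:ℂ)^2 * (q:ℂ)^2)^(-(n:ℤ))
      * ((-Complex.I * (q:ℂ))^n * (-Complex.I * (a:ℂ) * (q:ℂ))^n
            * expE n (-Complex.I * (a:ℂ) * (q:ℂ))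
        + Complex.exp (2 * Complex.I * (a:ℂ) * (q:ℂ)) * (Complex.I * (q:ℂ))^n
            * (Complex.I * (a:ℂ) * (q:ℂ))^n * expE n (Complex.I * (a:ℂ) * (q:ℂ)))
    = cj * ((-1:ℂ)^n * ((1/2:ℂ) * (a:ℂ)^(1-(n:ℤ)) *
        (Complex.exp (-Complex.I * (a:ℂ) * (q:ℂ)) * expE n (-Complex.I * (a:ℂ) * (q:ℂ))
         + Complex.exp (Complex.I * (a:ℂ) * (q:ℂ)) * expE n (Complex.I * (a:ℂ) * (q:ℂ))))) := by
  have ha0 : (a:ℂ) ≠ 0 := by exact_mod_cast ha.ne'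
  have hq0 : (q:ℂ) ≠ 0 := by exact_mod_cast hq.ne'
  have hee : Complex.exp (-Complex.I * (a:ℂ) * (q:ℂ)) * Complex.exp (2 * Complex.I * (a:ℂ) * (q:ℂ))
      = Complex.exp (Complex.I * (a:ℂ) * (q:ℂ)) := by
    rw [← Complex.exp_add]; congr 1; ring
  have hp1 : (-Complex.I * (q:ℂ))^n * (-Complex.I * (a:ℂ) * (q:ℂ))^n
      = (-((a:ℝ)*(q:ℝ)^2) : ℂ)^n := by
    rw [← mul_pow]; congr 1; push_cast; linear_combination ((a:ℂ)*(q:ℂ)^2) * Complex.I_sq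
  have hp2 : (Complex.I * (q:ℂ))^n * (Complex.I * (a:ℂ) * (q:ℂ))^n
      = (-((a:ℝ)*(q:ℝ)^2) : ℂ)^n := by
    rw [← mul_pow]; congr 1; push_cast; linear_combination ((a:ℂ)*(q:ℂ)^2) * Complex.I_sq
  have hz1 : ((a:ℂ)^2 * (q:ℂ)^2)^(-(n:ℤ)) = (((a:ℂ)^2 * (q:ℂ)^2)^n)⁻¹ := by
    rw [zpow_neg, zpow_natCast]
  have hz2 : (a:ℂ)^(1-(n:ℤ)) = (a:ℂ) / (a:ℂ)^n := by
    rw [zpow_sub₀ ha0, zpow_one, zpow_natCast]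
  have key : ∀ e E : ℂ, (1/2 : ℂ) * cj * e * (a:ℂ)
      * (((a:ℂ)^2 * (q:ℂ)^2)^n)⁻¹ * ((-((a:ℝ)*(q:ℝ)^2) : ℂ)^n * E)
      = cj * ((-1:ℂ)^n * ((1/2:ℂ) * ((a:ℂ)/(a:ℂ)^n) * (e * E))) := by
    intro e E
    have hpow : ((-((a:ℝ)*(q:ℝ)^2) : ℂ))^n = (-1:ℂ)^n * ((a:ℂ)^n * ((q:ℂ)^2)^n) := by
      push_cast
      rw [show -((a:ℂ)*(q:ℂ)^2) = (-1) * ((a:ℂ) * (q:ℂ)^2) by ring, mul_pow, mul_pow]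
    have hpow2 : (((a:ℂ)^2 * (q:ℂ)^2)^n) = (a:ℂ)^n * (a:ℂ)^n * ((q:ℂ)^2)^n := by
      rw [mul_pow, pow_two, mul_pow]
    rw [hpow, hpow2]
    have hne : (a:ℂ)^n ≠ 0 := pow_ne_zero _ ha0
    have hne2 : ((q:ℂ)^2)^n ≠ 0 := pow_ne_zero _ (pow_ne_zero _ hq0)
    field_simp
  rw [hz1, hz2]
  have expand : (1/2 : ℂ) * cj * Complex.exp (-Complex.I * (a:ℂ) * (q:ℂ)) * (a:ℂ)
      * (((a:ℂ)^2 * (q:ℂ)^2)^n)⁻¹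
      * ((-Complex.I * (q:ℂ))^n * (-Complex.I * (a:ℂ) * (q:ℂ))^n
            * expE n (-Complex.I * (a:ℂ) * (q:ℂ))
        + Complex.exp (2 * Complex.I * (a:ℂ) * (q:ℂ)) * (Complex.I * (q:ℂ))^n
            * (Complex.I * (a:ℂ) * (q:ℂ))^n * expE n (Complex.I * (a:ℂ) * (q:ℂ)))
      = (1/2 : ℂ) * cj * Complex.exp (-Complex.I * (a:ℂ) * (q:ℂ)) * (a:ℂ)
          * (((a:ℂ)^2 * (q:ℂ)^2)^n)⁻¹
          * (((-Complex.I * (q:ℂ))^n * (-Complex.I * (a:ℂ) * (q:ℂ))^n)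
              * expE n (-Complex.I * (a:ℂ) * (q:ℂ)))
        + (1/2 : ℂ) * cj * (Complex.exp (-Complex.I * (a:ℂ) * (q:ℂ))
            * Complex.exp (2 * Complex.I * (a:ℂ) * (q:ℂ))) * (a:ℂ)
          * (((a:ℂ)^2 * (q:ℂ)^2)^n)⁻¹
          * (((Complex.I * (q:ℂ))^n * (Complex.I * (a:ℂ) * (q:ℂ))^n)
              * expE n (Complex.I * (a:ℂ) * (q:ℂ))) := by ring
  rw [expand, hp1, hp2, hee, key, key]
  ring

lemma exp_neg_hasDeriv : ∀ t ∈ Set.Ioi (0:ℝ),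
    HasDerivWithinAt (fun t : ℝ => Real.exp (-t)) (-Real.exp (-t)) (Set.Ioi 0) t := by
  intro t _
  simpa using (((hasDerivAt_id t).neg).exp).hasDerivWithinAt

lemma exp_neg_injOn : InjOn (fun t : ℝ => Real.exp (-t)) (Set.Ioi 0) := by
  intro x _ y _ h
  have := Real.exp_injective h
  linarith [neg_injective this]

/-- the x-side integrand -/
noncomputable def gfun (n : ℕ) (q s : ℝ) : ℝ → ℂ := fun x =>
  ((x ^ s : ℝ) : ℂ) * ((Real.log x : ℝ) : ℂ)^n / ((q:ℂ)^2 + (((Real.log x : ℝ)):ℂ)^2)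

lemma gfun_comp {n : ℕ} {q s : ℝ} (hq : 0 < q) {t : ℝ} (ht : t ∈ Set.Ioi (0:ℝ)) :
    |(-Real.exp (-t))| • gfun n q s (Real.exp (-t))
      = (-1:ℂ)^n * ((t:ℂ)^n * Complex.exp (-(((s+1) : ℝ)*t)) / ((q:ℂ)^2 + (t:ℂ)^2)) := by
  rw [gfun, abs_neg, abs_of_pos (Real.exp_pos _)]
  rw [Real.rpow_def_of_pos (Real.exp_pos _), Real.log_exp]
  have hexp : ((Real.exp (-t) : ℝ) : ℂ) * ((Real.exp (-t*s) : ℝ) : ℂ)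
      = Complex.exp (-(((s+1):ℝ)*t)) := by
    rw [Complex.ofReal_exp, Complex.ofReal_exp, ← Complex.exp_add]
    congr 1
    push_cast
    ring
  have hC : ((-t:ℝ):ℂ)^n = (-1:ℂ)^n * (t:ℂ)^n := by
    push_cast
    rw [show -(t:ℂ) = (-1) * (t:ℂ) by ring, mul_pow]
  have hD : ((q:ℂ)^2 + (((-t:ℝ)):ℂ)^2) = ((q:ℂ)^2 + (t:ℂ)^2) := by push_cast; ring
  rw [Complex.real_smul, hC, hD, div_eq_mul_inv, div_eq_mul_inv]
  linear_combination ((-1:ℂ)^n * (t:ℂ)^n * ((q:ℂ)^2+(t:ℂ)^2)⁻¹) * hexp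

lemma integrableOn_tside (n : ℕ) {a q : ℝ} (ha : 0 < a) (hq : 0 < q) :
    IntegrableOn (fun t : ℝ => (t:ℂ)^n * Complex.exp (-((a:ℝ)*t)) / ((q:ℂ)^2 + (t:ℂ)^2))
      (Set.Ioi 0) := by
  apply Integrable.mono' (((integrableOn_pow_exp n ha).mul_const ((q^2)⁻¹)))
  · apply Measurable.aestronglyMeasurable
    fun_prop
  · filter_upwards [ae_restrict_mem measurableSet_Ioi] with t ht
    have ht0 : (0:ℝ) < t := ht
    have hD : ((q:ℂ)^2 + (t:ℂ)^2) = (((q^2 + t^2 : ℝ)):ℂ) := by push_cast; ring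
    rw [norm_div, norm_mul, norm_pow, Complex.norm_real, Real.norm_of_nonneg ht0.le, hD,
      Complex.norm_real, Real.norm_of_nonneg (by positivity),
      Complex.norm_exp]
    have h1 : ((-((a:ℂ)*(t:ℂ)))).re = -(a*t) := by simp
    rw [h1]
    rw [div_le_iff₀ (by positivity : (0:ℝ) < q^2+t^2)]
    calc t^n * Real.exp (-(a*t)) = (t^n * Real.exp (-(a*t)) * (q^2)⁻¹) * q^2 := by field_simp
      _ ≤ (t^n * Real.exp (-(a*t)) * (q^2)⁻¹) * (q^2+t^2) := by
          apply mul_le_mul_of_nonneg_left (by nlinarith) (by positivity)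


lemma integral_xside (n : ℕ) {q s : ℝ} (hq : 0 < q) (hs : -1 < s) :
    ∫ x in Set.Ioo (0:ℝ) 1, gfun n q s x
      = (-1:ℂ)^n * ∫ t in Set.Ioi (0:ℝ),
          (t:ℂ)^n * Complex.exp (-(((s+1):ℝ)*t)) / ((q:ℂ)^2 + (t:ℂ)^2) := by
  rw [← image_exp_neg,
    integral_image_eq_integral_abs_deriv_smul measurableSet_Ioi exp_neg_hasDeriv exp_neg_injOn,
    setIntegral_congr_fun measurableSet_Ioi (fun t ht => gfun_comp hq ht), integral_const_mul]

lemma integrableOn_xside (n : ℕ) {q s : ℝ} (hq : 0 < q) (hs : -1 < s) :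
    IntegrableOn (gfun n q s) (Set.Ioo 0 1) := by
  rw [← image_exp_neg, integrableOn_image_iff_integrableOn_abs_deriv_smul measurableSet_Ioi
    exp_neg_hasDeriv exp_neg_injOn]
  apply (((integrableOn_tside n (by linarith : (0:ℝ) < s+1) hq).const_mul ((-1:ℂ)^n)).congr)
  filter_upwards [ae_restrict_mem measurableSet_Ioi] with t ht
  exact (gfun_comp hq ht).symm

theorem stmt1 (n : ℕ) (hn : 2 ≤ n) (b q m : ℝ) (hb : 0 < b) (hq : 0 < q)
    (hm : -1 < m) (c : ℂ) (hc : ‖c‖ < 1) :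
    (∫ x in (0:ℝ)..1, (x:ℂ) ^ (m:ℂ) * (Complex.log (x:ℂ)) ^ n
        / ((1 + c * (x:ℂ) ^ (b:ℂ)) * ((q:ℂ) ^ 2 + (Complex.log (x:ℂ)) ^ 2)))
    = (Nat.factorial (n - 1) : ℂ) * ∑' j : ℕ,
        (1/2 : ℂ) * (-c) ^ j
          * Complex.exp (-Complex.I * (1 + (b:ℂ) * (j:ℂ) + (m:ℂ)) * (q:ℂ))
          * (1 + (b:ℂ) * (j:ℂ) + (m:ℂ))
          * ((1 + (b:ℂ) * (j:ℂ) + (m:ℂ)) ^ 2 * (q:ℂ) ^ 2) ^ (-(n:ℤ))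
          * ((-Complex.I * (q:ℂ)) ^ n * (-Complex.I * (1 + (b:ℂ) * (j:ℂ) + (m:ℂ)) * (q:ℂ)) ^ n
                * expE n (-Complex.I * (1 + (b:ℂ) * (j:ℂ) + (m:ℂ)) * (q:ℂ))
              + Complex.exp (2 * Complex.I * (1 + (b:ℂ) * (j:ℂ) + (m:ℂ)) * (q:ℂ))
                * (Complex.I * (q:ℂ)) ^ n * (Complex.I * (1 + (b:ℂ) * (j:ℂ) + (m:ℂ)) * (q:ℂ)) ^ n
                * expE n (Complex.I * (1 + (b:ℂ) * (j:ℂ) + (m:ℂ)) * (q:ℂ))) := by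
  have hbj : ∀ j : ℕ, (0:ℝ) ≤ b * j := fun j => mul_nonneg hb.le (Nat.cast_nonneg j)
  have hmj : ∀ j : ℕ, -1 < m + b * j := fun j => by have := hbj j; linarith
  have hA1 : ∀ j : ℕ, (0:ℝ) < 1 + b * j + m := fun j => by have := hbj j; linarith
  set f : ℕ → ℝ → ℂ := fun j x => (-c * ((x ^ b : ℝ) : ℂ))^j *
      (((x ^ m : ℝ):ℂ) * ((Real.log x : ℝ):ℂ)^n
        / ((q:ℂ)^2 + ((Real.log x : ℝ):ℂ)^2)) with hf
  -- f j agrees with (-c)^j • gfun on Ioo 0 1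
  have hfg : ∀ j : ℕ, ∀ x ∈ Set.Ioo (0:ℝ) 1, f j x = (-c)^j * gfun n q (m + b*j) x := by
    intro j x hx
    have hx0 : (0:ℝ) < x := hx.1
    have hxbj : ((x^b:ℝ):ℂ)^j * ((x^m:ℝ):ℂ) = ((x^(m + b*(j:ℝ)):ℝ):ℂ) := by
      rw [← Complex.ofReal_pow, ← Complex.ofReal_mul]
      congr 1
      rw [← Real.rpow_natCast (x^b) j, ← Real.rpow_mul hx0.le, ← Real.rpow_add hx0]
      ring_nf
    rw [hf]
    dsimp only
    rw [gfun, mul_pow]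
    rw [div_eq_mul_inv, div_eq_mul_inv]
    push_cast at hxbj ⊢
    linear_combination ((-c)^j * ((Real.log x : ℝ):ℂ)^n
      * (((q:ℂ)^2 + ((Real.log x : ℝ):ℂ)^2))⁻¹) * hxbj
  -- integrability of each f j
  have hint : ∀ j : ℕ, IntegrableOn (f j) (Set.Ioo 0 1) := by
    intro j
    apply (((integrableOn_xside n hq (hmj j)).const_mul ((-c)^j)).congr)
    filter_upwards [ae_restrict_mem measurableSet_Ioo] with x hx
    exact (hfg j x hx).symm
  -- geometric bound for the norms
  set K : ℝ := ∫ x in Set.Ioo (0:ℝ) 1, ‖gfun n q m x‖ with hK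
  have hnorm_le : ∀ j : ℕ, (∫ x in Set.Ioo (0:ℝ) 1, ‖f j x‖) ≤ ‖c‖^j * K := by
    intro j
    rw [hK, ← integral_const_mul]
    apply setIntegral_mono_on ((hint j).norm)
      (((integrableOn_xside n hq hm).norm).const_mul _) measurableSet_Ioo
    intro x hx
    have hx0 : (0:ℝ) < x := hx.1
    have hxb1 : x^b ≤ 1 := (Real.rpow_le_one hx0.le hx.2.le hb.le)
    have hb1 : ‖-c * ((x^b:ℝ):ℂ)‖ ≤ ‖c‖ := by
      rw [norm_mul, norm_neg, Complex.norm_real,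
        Real.norm_of_nonneg (Real.rpow_nonneg hx0.le b)]
      calc ‖c‖ * x^b ≤ ‖c‖ * 1 := mul_le_mul_of_nonneg_left hxb1 (norm_nonneg c)
        _ = ‖c‖ := mul_one _
    rw [hf]
    dsimp only
    rw [norm_mul, norm_pow]
    rw [show (((x ^ m : ℝ):ℂ) * ((Real.log x : ℝ):ℂ)^n
        / ((q:ℂ)^2 + ((Real.log x : ℝ):ℂ)^2)) = gfun n q m x from rfl]
    exact mul_le_mul_of_nonneg_right (pow_le_pow_left₀ (norm_nonneg _) hb1 j) (norm_nonneg _)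
  have hsum : Summable (fun j : ℕ => ∫ x in Set.Ioo (0:ℝ) 1, ‖f j x‖) := by
    apply Summable.of_nonneg_of_le (fun j => integral_nonneg (fun x => norm_nonneg _)) hnorm_le
    exact (summable_geometric_of_lt_one (norm_nonneg c) hc).mul_right K
  -- pointwise series expansion
  have hpt : ∀ x ∈ Set.Ioo (0:ℝ) 1,
      (x:ℂ) ^ (m:ℂ) * (Complex.log (x:ℂ)) ^ n
        / ((1 + c * (x:ℂ) ^ (b:ℂ)) * ((q:ℂ) ^ 2 + (Complex.log (x:ℂ)) ^ 2))
      = ∑' j : ℕ, f j x := by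
    intro x hx
    have hx0 : (0:ℝ) < x := hx.1
    have hxb1 : ‖-c * ((x^b:ℝ):ℂ)‖ < 1 := by
      rw [norm_mul, norm_neg, Complex.norm_real,
        Real.norm_of_nonneg (Real.rpow_nonneg hx0.le b)]
      have hxb : x^b ≤ 1 := Real.rpow_le_one hx0.le hx.2.le hb.le
      calc ‖c‖ * x^b ≤ ‖c‖ * 1 := mul_le_mul_of_nonneg_left hxb (norm_nonneg c)
        _ = ‖c‖ := mul_one _
        _ < 1 := hc
    rw [← Complex.ofReal_cpow hx0.le, ← Complex.ofReal_cpow hx0.le,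
      ← Complex.ofReal_log hx0.le]
    rw [hf]
    dsimp only
    rw [tsum_mul_right, tsum_geometric_of_norm_lt_one hxb1,
      show (1 - (-c * ((x^b:ℝ):ℂ))) = 1 + c*((x^b:ℝ):ℂ) by ring]
    rw [div_eq_mul_inv, div_eq_mul_inv, mul_inv]
    ring
  -- assemble
  rw [intervalIntegral.integral_of_le zero_le_one, integral_Ioc_eq_integral_Ioo,
    setIntegral_congr_fun measurableSet_Ioo hpt,
    ← integral_tsum_of_summable_integral_norm hint hsum]
  rw [← tsum_mul_left]
  apply tsum_congr
  intro j
  have hval : (∫ x in Set.Ioo (0:ℝ) 1, f j x)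
      = (-c)^j * ((-1:ℂ)^n * ∫ t in Set.Ioi (0:ℝ),
          (t:ℂ)^n * Complex.exp (-((((1 + b*(j:ℕ) + m : ℝ)):ℂ) * (t:ℂ))) / ((q:ℂ)^2 + (t:ℂ)^2)) := by
    rw [setIntegral_congr_fun measurableSet_Ioo (hfg j), integral_const_mul,
      integral_xside n hq (hmj j)]
    rw [show ((m + b*(j:ℕ) + 1 : ℝ)) = (1 + b*(j:ℕ) + m : ℝ) by ring]
  rw [hval, integral_I n hn (hA1 j) hq]
  have hAC : (1 + (b:ℂ) * (j:ℂ) + (m:ℂ)) = (((1 + b*(j:ℕ) + m : ℝ)):ℂ) := by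
    push_cast; ring
  rw [hAC, term_simp n (hA1 j) hq ((-c)^j)]
  ring
end

section
/- Let a ∈ ℂ with Re(a) > 0 and Im(a) ≠ 0, and let m ∈ ℝ with 0 < m < 1. Then ∫₀¹ x^{m−1} / (a⁴ − (log x)⁴) dx = −( e^{−a m} Γ(0, −a m) + i e^{−i a m} ( Γ(0, −i a m) − e^{2 i a m} Γ(0, i a m) ) − e^{a m} Γ(0, a m) ) / (4 a³). -/
open MeasureTheory

lemma add_ne_zero_of_im {w : ℂ} (hw : w.im ≠ 0) (t : ℝ) : (t:ℂ) + w ≠ 0 := by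
  intro h
  apply hw
  have := congrArg Complex.im h
  simpa using this

lemma integrable_aux {c : ℂ} (hc : c.im ≠ 0) {b : ℝ} (hb : 0 < b) :
    IntegrableOn (fun u : ℝ => Complex.exp (-((b:ℂ)*u)) / ((u:ℂ) + c)) (Set.Ioi 0) := by
  have h1 : IntegrableOn (fun u : ℝ => |c.im|⁻¹ * Real.exp (-(b*u))) (Set.Ioi 0) :=
by
    have := (exp_neg_integrableOn_Ioi 0 hb).const_mul |c.im|⁻¹
    simp only [neg_mul] at this
    exact this
  have hcont : Continuous fun u : ℝ => Complex.exp (-((b:ℂ)*u)) / ((u:ℂ) + c) := by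
    exact Continuous.div
      (Complex.continuous_exp.comp ((continuous_const.mul Complex.continuous_ofReal).neg))
      (Complex.continuous_ofReal.add continuous_const)
      (fun u => add_ne_zero_of_im hc u)
  refine Integrable.mono h1 hcont.aestronglyMeasurable ?_
  filter_upwards with u
  rw [norm_div, Complex.norm_exp]
  have h2 : |c.im| ≤ ‖(u:ℂ) + c‖ := by
    have := Complex.abs_im_le_norm ((u:ℂ) + c)
    simpa using this
  have h3 : (0:ℝ) < |c.im| := abs_pos.mpr hc
  have h4 : (-((b:ℂ)*u)).re = -(b*u) := by simp
  rw [h4]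
  calc Real.exp (-(b*u)) / ‖(u:ℂ) + c‖ ≤ Real.exp (-(b*u)) / |c.im| :=
        div_le_div_of_nonneg_left (Real.exp_pos _).le h3 h2
    _ = |c.im|⁻¹ * Real.exp (-(b*u)) := by ring
    _ ≤ ‖|c.im|⁻¹ * Real.exp (-(b*u))‖ := le_abs_self _

lemma key {c : ℂ} (hc : c.im ≠ 0) {m : ℝ} (hm : 0 < m) :
    ∫ u in Set.Ioi (0:ℝ), Complex.exp (-((m:ℂ)*u)) / ((u:ℂ) + c)
      = Complex.exp (c*(m:ℂ)) * uGamma 0 (c*(m:ℂ)) := by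
  have hmC : ((m:ℂ)) ≠ 0 := Complex.ofReal_ne_zero.mpr hm.ne'
  have him : (c*(m:ℂ)).im ≠ 0 := by
    simpa [Complex.mul_im] using mul_ne_zero hc hm.ne'
  have hG : uGamma 0 (c*(m:ℂ))
      = Complex.exp (-(c*(m:ℂ))) *
        ∫ t in Set.Ioi (0:ℝ), Complex.exp (-(t:ℂ)) / ((t:ℂ) + c*(m:ℂ)) := by
    unfold uGamma
    congr 1
    refine setIntegral_congr_fun measurableSet_Ioi (fun t ht => ?_)
    rw [zero_sub, Complex.cpow_neg_one, div_eq_mul_inv]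
  have hcv := MeasureTheory.integral_comp_mul_left_Ioi
      (fun t : ℝ => Complex.exp (-(t:ℂ)) / ((t:ℂ) + c*(m:ℂ))) 0 hm
  rw [mul_zero] at hcv
  have h2 : Set.EqOn
      (fun u : ℝ => (fun t : ℝ => Complex.exp (-(t:ℂ)) / ((t:ℂ) + c*(m:ℂ))) (m*u))
      (fun u : ℝ => ((m:ℂ))⁻¹ * (Complex.exp (-((m:ℂ)*u)) / ((u:ℂ) + c)))
      (Set.Ioi 0) := by
    intro u hu
    have hu0 : (u:ℂ) + c ≠ 0 := add_ne_zero_of_im hc u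
    simp only
    push_cast
    rw [show ((m:ℂ)*u + c*(m:ℂ)) = (m:ℂ) * ((u:ℂ) + c) by ring]
    field_simp
  rw [setIntegral_congr_fun measurableSet_Ioi h2, integral_const_mul] at hcv
  have : ∫ t in Set.Ioi (0:ℝ), Complex.exp (-(t:ℂ)) / ((t:ℂ) + c*(m:ℂ))
      = ∫ u in Set.Ioi (0:ℝ), Complex.exp (-((m:ℂ)*u)) / ((u:ℂ) + c) := by
    have hsm : (m⁻¹ : ℝ) • (∫ t in Set.Ioi (0:ℝ), Complex.exp (-(t:ℂ)) / ((t:ℂ) + c*(m:ℂ)))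
        = ((m:ℂ))⁻¹ * ∫ t in Set.Ioi (0:ℝ), Complex.exp (-(t:ℂ)) / ((t:ℂ) + c*(m:ℂ)) := by
      rw [Complex.real_smul]; push_cast; ring
    rw [hsm] at hcv
    field_simp at hcv
    rw [mul_comm (m:ℂ) c] at hcv
    exact hcv.symm
  rw [← this, hG, ← mul_assoc, ← Complex.exp_add, add_neg_cancel, Complex.exp_zero, one_mul]

theorem stmt3 (a : ℂ) (ha : 0 < a.re) (ha' : a.im ≠ 0) (m : ℝ) (hm0 : 0 < m) (hm1 : m < 1) :
    (∫ x in (0:ℝ)..1, (x:ℂ) ^ ((m:ℂ) - 1) / (a ^ 4 - (Complex.log (x:ℂ)) ^ 4))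
    = -(Complex.exp (-(a * (m:ℂ))) * uGamma 0 (-(a * (m:ℂ)))
        + Complex.I * Complex.exp (-Complex.I * a * (m:ℂ))
          * (uGamma 0 (-Complex.I * a * (m:ℂ))
              - Complex.exp (2 * Complex.I * a * (m:ℂ)) * uGamma 0 (Complex.I * a * (m:ℂ)))
        - Complex.exp (a * (m:ℂ)) * uGamma 0 (a * (m:ℂ))) / (4 * a ^ 3) := by
  have haC : a ≠ 0 := fun h => by simp [h] at ha
  set I := Complex.I with hI
  set k : ℂ := (4 * a^3)⁻¹ with hk
  have hIa : (I*a).im = a.re := by simp [hI, Complex.mul_im]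
  have hc1 : (-a).im ≠ 0 := by simpa using ha'
  have hc2 : a.im ≠ 0 := ha'
  have hc4 : (I*a).im ≠ 0 := by rw [hIa]; exact ha.ne'
  have hc3 : (-(I*a)).im ≠ 0 := by simpa [hIa] using ha.ne'
  -- image of exp(-·)
  have himg : (fun u : ℝ => Real.exp (-u)) '' Set.Ioi 0 = Set.Ioo 0 1 := by
    ext x
    constructor
    · rintro ⟨u, hu, rfl⟩
      exact ⟨Real.exp_pos _, Real.exp_lt_one_iff.mpr (neg_lt_zero.mpr hu)⟩
    · rintro ⟨h0, h1⟩
      refine ⟨-Real.log x, ?_, by simp [Real.exp_log h0]⟩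
      simpa using Real.log_neg h0 h1
  have hinj : Set.InjOn (fun u : ℝ => Real.exp (-u)) (Set.Ioi 0) :=
    (Real.exp_injective.comp neg_injective).injOn
  have hder : ∀ x ∈ Set.Ioi (0:ℝ),
      HasDerivWithinAt (fun u : ℝ => Real.exp (-u)) (Real.exp (-x) * (-1)) (Set.Ioi 0) x :=
    fun x _ => ((Real.hasDerivAt_exp (-x)).comp x (hasDerivAt_neg x)).hasDerivWithinAt
  have hsub := integral_image_eq_integral_abs_deriv_smul measurableSet_Ioi hder hinj
      (fun x : ℝ => (x:ℂ) ^ ((m:ℂ) - 1) / (a ^ 4 - (Complex.log (x:ℂ)) ^ 4))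
  -- pointwise identity on Ioi 0
  have hpt2 : Set.EqOn
      (fun x : ℝ => |Real.exp (-x) * (-1)| •
        (((Real.exp (-x) : ℝ):ℂ) ^ ((m:ℂ) - 1)
          / (a ^ 4 - (Complex.log ((Real.exp (-x) : ℝ):ℂ)) ^ 4)))
      (fun u : ℝ =>
        (-k) * (Complex.exp (-((m:ℂ)*u)) / ((u:ℂ) + -a))
        + k * (Complex.exp (-((m:ℂ)*u)) / ((u:ℂ) + a))
        + (-(I*k)) * (Complex.exp (-((m:ℂ)*u)) / ((u:ℂ) + -(I*a)))
        + (I*k) * (Complex.exp (-((m:ℂ)*u)) / ((u:ℂ) + I*a)))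
      (Set.Ioi 0) := by
    intro u hu
    have hu' : (0:ℝ) < u := hu
    have hx : (0:ℝ) < Real.exp (-u) := Real.exp_pos _
    have hlog : Complex.log ((Real.exp (-u) : ℝ):ℂ) = -(u:ℂ) := by
      rw [← Complex.ofReal_log hx.le, Real.log_exp]
      push_cast; ring
    have hxC : ((Real.exp (-u) : ℝ):ℂ) ≠ 0 := by exact_mod_cast hx.ne'
    have hpow : ((Real.exp (-u) : ℝ):ℂ) ^ ((m:ℂ) - 1)
        = Complex.exp (-(u:ℂ) * ((m:ℂ) - 1)) := by
      rw [Complex.cpow_def_of_ne_zero hxC, hlog]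
    have habs : |Real.exp (-u) * (-1)| = Real.exp (-u) := by
      rw [abs_mul]; simp [abs_of_pos hx]
    simp only
    rw [habs, hpow, hlog, Complex.real_smul, Complex.ofReal_exp]
    push_cast
    rw [show (-(u:ℂ))^4 = (u:ℂ)^4 by ring]
    rw [show Complex.exp (-(u:ℂ)) * (Complex.exp (-(u:ℂ) * ((m:ℂ)-1)) / (a^4 - (u:ℂ)^4))
          = Complex.exp (-(u:ℂ)) * Complex.exp (-(u:ℂ) * ((m:ℂ)-1)) / (a^4 - (u:ℂ)^4)
        from mul_div_assoc' _ _ _]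
    rw [← Complex.exp_add, show (-(u:ℂ) + -(u:ℂ) * ((m:ℂ)-1)) = -((m:ℂ)*u) by ring]
    -- now partial fraction identity
    have d1 : (u:ℂ) + -a ≠ 0 := add_ne_zero_of_im hc1 u
    have d2 : (u:ℂ) + a ≠ 0 := add_ne_zero_of_im hc2 u
    have d3 : (u:ℂ) + -(I*a) ≠ 0 := add_ne_zero_of_im hc3 u
    have d4 : (u:ℂ) + I*a ≠ 0 := add_ne_zero_of_im hc4 u
    have hfac : ((u:ℂ) + -(I*a)) * ((u:ℂ) + I*a) = (u:ℂ)^2 + a^2 := by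
      linear_combination (-(a^2)) * Complex.I_sq
    have hA : (u:ℂ)^2 - a^2 ≠ 0 := by
      rw [show ((u:ℂ)^2 - a^2) = ((u:ℂ) + -a) * ((u:ℂ) + a) by ring]
      exact mul_ne_zero d1 d2
    have hB : (u:ℂ)^2 + a^2 ≠ 0 := by rw [← hfac]; exact mul_ne_zero d3 d4
    have hden : a^4 - (u:ℂ)^4 ≠ 0 := by
      rw [show (a^4 - (u:ℂ)^4) = -(((u:ℂ)^2 - a^2) * ((u:ℂ)^2 + a^2)) by ring]
      exact neg_ne_zero.mpr (mul_ne_zero hA hB)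
    set E := Complex.exp (-((m:ℂ)*u)) with hE
    have p1 : (-k) * (E / ((u:ℂ) + -a)) + k * (E / ((u:ℂ) + a))
        = E * (-(2*a*k)) / ((u:ℂ)^2 - a^2) := by
      rw [show ((u:ℂ)^2 - a^2) = ((u:ℂ) + -a) * ((u:ℂ) + a) by ring]
      field_simp
      ring
    have p2 : (-(I*k)) * (E / ((u:ℂ) + -(I*a))) + (I*k) * (E / ((u:ℂ) + I*a))
        = E * (2*a*k) / ((u:ℂ)^2 + a^2) := by
      have hnum : (-(I*k))*E * ((u:ℂ) + I*a) + ((u:ℂ) + -(I*a)) * ((I*k)*E) = E * (2*a*k) := by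
        linear_combination (-(2*a*k*E)) * Complex.I_sq
      rw [mul_div_assoc', mul_div_assoc', div_add_div _ _ d3 d4, hfac, hnum]
    have hk4 : 4*a^3*k = 1 := by
      rw [hk]; field_simp
    rw [add_assoc (-k * _ + _), p1, p2,
      div_add_div _ _ hA hB, div_eq_div_iff hden (mul_ne_zero hA hB)]
    linear_combination (E*(a^4-(u:ℂ)^4)) * hk4
  rw [intervalIntegral.integral_of_le (by norm_num : (0:ℝ) ≤ 1),
    MeasureTheory.integral_Ioc_eq_integral_Ioo, ← himg, hsub,
    setIntegral_congr_fun measurableSet_Ioi hpt2]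
  have i1 : IntegrableOn
      (fun u : ℝ => (-k) * (Complex.exp (-((m:ℂ)*u)) / ((u:ℂ) + -a))) (Set.Ioi 0) :=
    (integrable_aux hc1 hm0).const_mul _
  have i2 : IntegrableOn
      (fun u : ℝ => k * (Complex.exp (-((m:ℂ)*u)) / ((u:ℂ) + a))) (Set.Ioi 0) :=
    (integrable_aux hc2 hm0).const_mul _
  have i3 : IntegrableOn
      (fun u : ℝ => (-(I*k)) * (Complex.exp (-((m:ℂ)*u)) / ((u:ℂ) + -(I*a)))) (Set.Ioi 0) :=
    (integrable_aux hc3 hm0).const_mul _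
  have i4 : IntegrableOn
      (fun u : ℝ => (I*k) * (Complex.exp (-((m:ℂ)*u)) / ((u:ℂ) + I*a))) (Set.Ioi 0) :=
    (integrable_aux hc4 hm0).const_mul _
  have i12 : IntegrableOn
      (fun u : ℝ => (-k) * (Complex.exp (-((m:ℂ)*u)) / ((u:ℂ) + -a))
        + k * (Complex.exp (-((m:ℂ)*u)) / ((u:ℂ) + a))) (Set.Ioi 0) := i1.add i2
  have i34 : IntegrableOn
      (fun u : ℝ => (-(I*k)) * (Complex.exp (-((m:ℂ)*u)) / ((u:ℂ) + -(I*a)))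
        + (I*k) * (Complex.exp (-((m:ℂ)*u)) / ((u:ℂ) + I*a))) (Set.Ioi 0) := i3.add i4
  rw [show (fun u : ℝ =>
        (-k) * (Complex.exp (-((m:ℂ)*u)) / ((u:ℂ) + -a))
        + k * (Complex.exp (-((m:ℂ)*u)) / ((u:ℂ) + a))
        + (-(I*k)) * (Complex.exp (-((m:ℂ)*u)) / ((u:ℂ) + -(I*a)))
        + (I*k) * (Complex.exp (-((m:ℂ)*u)) / ((u:ℂ) + I*a)))
      = (fun u : ℝ =>
        ((-k) * (Complex.exp (-((m:ℂ)*u)) / ((u:ℂ) + -a))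
          + k * (Complex.exp (-((m:ℂ)*u)) / ((u:ℂ) + a)))
        + ((-(I*k)) * (Complex.exp (-((m:ℂ)*u)) / ((u:ℂ) + -(I*a)))
          + (I*k) * (Complex.exp (-((m:ℂ)*u)) / ((u:ℂ) + I*a))))
      from by funext u; ring]
  rw [MeasureTheory.integral_add i12 i34, MeasureTheory.integral_add i1 i2,
    MeasureTheory.integral_add i3 i4]
  simp only [integral_const_mul]
  rw [key hc1 hm0, key hc2 hm0, key hc3 hm0, key hc4 hm0]
  have e1 : (-a)*(m:ℂ) = -(a*(m:ℂ)) := by ring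
  have e3 : (-(I*a))*(m:ℂ) = -I*a*(m:ℂ) := by ring
  rw [e1, e3]
  have hexp : Complex.exp (-I*a*(m:ℂ)) * Complex.exp (2*I*a*(m:ℂ))
      = Complex.exp (I*a*(m:ℂ)) := by
    rw [← Complex.exp_add]; congr 1; ring
  rw [show Complex.exp (I*a*(m:ℂ)) = Complex.exp (-I*a*(m:ℂ)) * Complex.exp (2*I*a*(m:ℂ))
      from hexp.symm]
  rw [hk]
  field_simp
  ring
end

section
/- Let a ∈ ℝ with 0 < a < 1 and let b, c, k, m ∈ ℂ with Re(b) > 0, Re(m) > 0 and ‖c‖ < 1. Then ∫₀¹ x^{m−1} (−log(a x))^k log(1 + c x^b) dx = Σ_{j=0}^∞ a^{−b(1+j)−m} (−c)^j c · (b + b j + m)^{−1−k} · Γ(1+k, −(b + b j + m) log a) / (1 + j). -/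
open Set MeasureTheory Filter Asymptotics
open scoped Topology Real

private lemma measurable_cpow_const (k : ℂ) : Measurable fun x : ℂ => x ^ k := by
  have h : (fun x : ℂ => x ^ k)
      = fun x => if x = 0 then (if k = 0 then 1 else 0) else Complex.exp (Complex.log x * k) := by
    ext x; rw [Complex.cpow_def]
  rw [h]
  exact Measurable.ite (measurableSet_eq)
    measurable_const (Complex.measurable_exp.comp (Complex.measurable_log.mul_const k))

private lemma norm_cpow_le_aux {w y : ℂ} {l L : ℝ} (hl : 0 < l) (h1 : l ≤ ‖w‖)
    (h2 : ‖w‖ ≤ L) :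
    ‖w ^ y‖ ≤ Real.exp (Real.pi * |y.im|) * (l ^ y.re + L ^ y.re) := by
  have hw : w ≠ 0 := by
    intro h; rw [h, norm_zero] at h1; linarith
  have habs : 0 < ‖w‖ := lt_of_lt_of_le hl h1
  rw [Complex.norm_cpow_of_ne_zero hw]
  have hb : ‖w‖ ^ y.re ≤ l ^ y.re + L ^ y.re := by
    rcases le_or_gt 0 y.re with hy | hy
    · have : ‖w‖ ^ y.re ≤ L ^ y.re := Real.rpow_le_rpow habs.le h2 hy
      have hl' : 0 ≤ l ^ y.re := Real.rpow_nonneg hl.le _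
      linarith
    · have : ‖w‖ ^ y.re ≤ l ^ y.re := Real.rpow_le_rpow_of_nonpos hl h1 hy.le
      have hL' : 0 ≤ L ^ y.re := Real.rpow_nonneg (le_trans habs.le h2) _
      linarith
  have hexp : Real.exp (-(Real.pi * |y.im|)) ≤ Real.exp (w.arg * y.im) := by
    apply Real.exp_le_exp.2
    have := Complex.abs_arg_le_pi w
    have h1 : -(Real.pi * |y.im|) ≤ w.arg * y.im := by
      have := abs_mul w.arg y.im
      have h2 : |w.arg * y.im| ≤ Real.pi * |y.im| := by
        rw [abs_mul]
        exact mul_le_mul_of_nonneg_right (Complex.abs_arg_le_pi w) (abs_nonneg _)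
      linarith [neg_abs_le (w.arg * y.im)]
    exact h1
  calc ‖w‖ ^ y.re / Real.exp (w.arg * y.im)
      ≤ (l ^ y.re + L ^ y.re) / Real.exp (-(Real.pi * |y.im|)) := by
        have hL0 : 0 < L := lt_of_lt_of_le habs h2
        apply div_le_div₀ (by positivity) hb (Real.exp_pos _) hexp
    _ = Real.exp (Real.pi * |y.im|) * (l ^ y.re + L ^ y.re) := by
        rw [Real.exp_neg, div_eq_mul_inv, inv_inv, mul_comm]

private lemma integrableOn_exp_rpow {ε c d ρ : ℝ} (hε : 0 < ε) (hcd : 0 < c + d) :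
    IntegrableOn (fun t : ℝ => Real.exp (-(ε * t)) * (t + d) ^ ρ) (Ioi c) := by
  apply integrable_of_isBigO_exp_neg (half_pos hε) ?_ ?_
  · apply (Real.continuous_exp.comp (continuous_const.mul continuous_id).neg).continuousOn.mul
    apply ContinuousOn.rpow_const (by fun_prop)
    intro x hx
    left
    have : c ≤ x := hx
    nlinarith
  · have h := (isLittleO_rpow_exp_pos_mul_atTop ρ (half_pos hε)).comp_tendsto
      (tendsto_atTop_add_const_right atTop d tendsto_id)
    rw [isLittleO_iff] at h
    have h1 := h (c := 1) one_pos
    rw [isBigO_iff]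
    refine ⟨Real.exp (ε / 2 * d), ?_⟩
    filter_upwards [h1] with x hx
    simp only [Function.comp, id_eq] at hx
    have hx' : |(x + d) ^ ρ| ≤ Real.exp (ε / 2 * (x + d)) := by
      simpa [abs_of_nonneg (Real.exp_pos _).le] using hx
    have : |Real.exp (-(ε * x)) * (x + d) ^ ρ| ≤ Real.exp (-(ε*x)) * Real.exp (ε/2*(x+d)) := by
      rw [abs_mul, abs_of_nonneg (Real.exp_pos _).le]
      exact mul_le_mul_of_nonneg_left hx' (Real.exp_pos _).le
    calc ‖Real.exp (-(ε * x)) * (x + d) ^ ρ‖ ≤ Real.exp (-(ε*x)) * Real.exp (ε/2*(x+d)) := this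
      _ = Real.exp (ε/2*d) * ‖Real.exp (-(ε/2) * x)‖ := by
          rw [← Real.exp_add, Real.norm_eq_abs, abs_of_nonneg (Real.exp_pos _).le,
            ← Real.exp_add]
          ring_nf

private lemma image_exp_sub (T : ℝ) : (fun u : ℝ => Real.exp (T - u)) '' Ioi T = Ioo 0 1 := by
  ext y
  simp only [mem_image, mem_Ioi, mem_Ioo]
  constructor
  · rintro ⟨u, hu, rfl⟩
    refine ⟨Real.exp_pos _, ?_⟩
    rw [← Real.exp_zero]
    exact Real.exp_lt_exp.2 (by linarith)
  · rintro ⟨h0, h1⟩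
    refine ⟨T - Real.log y, by nlinarith [Real.log_neg h0 h1], ?_⟩
    rw [sub_sub_cancel, Real.exp_log h0]

private lemma image_affine (T σ : ℝ) (hσ : 0 < σ) :
    (fun t : ℝ => T + t / σ) '' Ioi 0 = Ioi T := by
  ext y
  simp only [mem_image, mem_Ioi]
  constructor
  · rintro ⟨t, ht, rfl⟩
    have : 0 < t / σ := div_pos ht hσ
    linarith
  · intro hy
    exact ⟨(y - T) * σ, by nlinarith, by field_simp; ring⟩

/-- substitution `x = exp (T - u)` for complex-valued integrals on `(0,1)` -/
private lemma integral_Ioo_eq (T : ℝ) (g : ℝ → ℂ) :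
    ∫ x in Ioo (0:ℝ) 1, g x
      = ∫ u in Ioi T, Real.exp (T - u) • g (Real.exp (T - u)) := by
  rw [← image_exp_sub T]
  rw [integral_image_eq_integral_abs_deriv_smul measurableSet_Ioi
    (f' := fun u => -Real.exp (T - u)) ?_ ?_]
  · simp only [abs_neg, abs_of_nonneg (Real.exp_pos _).le]
  · intro u _
    have h : HasDerivAt (fun u : ℝ => Real.exp (T - u)) (-Real.exp (T - u)) u := by
      have h1 : HasDerivAt (fun u : ℝ => T - u) (-1) u := (hasDerivAt_id u).const_sub T
      simpa using h1.exp
    exact h.hasDerivWithinAt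
  · intro u _ v _ h
    have := Real.exp_injective h
    linarith

private lemma integrableOn_Ioo_iff (T : ℝ) (g : ℝ → ℂ) :
    IntegrableOn g (Ioo (0:ℝ) 1)
      ↔ IntegrableOn (fun u => Real.exp (T - u) • g (Real.exp (T - u))) (Ioi T) := by
  rw [← image_exp_sub T]
  rw [integrableOn_image_iff_integrableOn_abs_deriv_smul measurableSet_Ioi
    (f' := fun u => -Real.exp (T - u)) ?_ ?_]
  · constructor
    · intro h; refine h.congr_fun (fun u _ => by simp [abs_of_nonneg (Real.exp_pos (T-u)).le]) measurableSet_Ioi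
    · intro h; refine h.congr_fun (fun u _ => by simp [abs_of_nonneg (Real.exp_pos (T-u)).le]) measurableSet_Ioi
  · intro u _
    have h1 : HasDerivAt (fun u : ℝ => T - u) (-1) u := (hasDerivAt_id u).const_sub T
    exact (by simpa using h1.exp : HasDerivAt (fun u : ℝ => Real.exp (T - u)) (-Real.exp (T - u)) u).hasDerivWithinAt
  · intro u _ v _ h
    have := Real.exp_injective h
    linarith

private lemma lemA {a : ℝ} (ha0 : 0 < a) (s k : ℂ) :
    ∫ x in Ioo (0:ℝ) 1, (x:ℂ) ^ (s - 1) * (-(Complex.log ((a:ℂ) * x))) ^ k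
      = (a:ℂ) ^ (-s) * ∫ u in Ioi (-Real.log a), Complex.exp (-(s * u)) * (u:ℂ) ^ k := by
  set T : ℝ := -Real.log a with hT
  rw [integral_Ioo_eq T, ← MeasureTheory.integral_const_mul]
  apply setIntegral_congr_fun measurableSet_Ioi
  intro u _
  have hea : (a : ℝ) = Real.exp (-T) := by rw [hT, neg_neg, Real.exp_log ha0]
  have hax : a * Real.exp (T - u) = Real.exp (-u) := by
    rw [hea, ← Real.exp_add]; ring_nf
  have hlog : Complex.log ((a:ℂ) * ((Real.exp (T - u) : ℝ) : ℂ)) = ((-u : ℝ) : ℂ) := by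
    rw [← Complex.ofReal_mul, hax, ← Complex.ofReal_log (Real.exp_pos _).le, Real.log_exp]
  have hcpow : ((Real.exp (T - u) : ℝ) : ℂ) ^ (s - 1)
      = Complex.exp (((T - u : ℝ) : ℂ) * (s - 1)) := by
    rw [Complex.ofReal_exp, Complex.cpow_def_of_ne_zero (Complex.exp_ne_zero _),
      Complex.log_exp (by simp [Real.pi_pos]) (by simp [Real.pi_pos.le])]
  have has : (a:ℂ) ^ (-s) = Complex.exp ((T:ℂ) * s) := by
    rw [Complex.cpow_def_of_ne_zero (Complex.ofReal_ne_zero.mpr ha0.ne'),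
      ← Complex.ofReal_log ha0.le]
    have : Real.log a = -T := by rw [hT]; ring
    rw [this]; push_cast; ring_nf
  simp only [hlog, hcpow]
  rw [Complex.real_smul, Complex.ofReal_exp, has]
  have h1 : -(((-u : ℝ) : ℂ)) = ((u : ℝ) : ℂ) := by push_cast; ring
  rw [h1]
  rw [show Complex.exp (((T - u : ℝ) : ℂ)) * (Complex.exp (((T - u : ℝ) : ℂ) * (s - 1)) * ((u:ℝ):ℂ) ^ k)
      = Complex.exp (((T - u : ℝ) : ℂ) + ((T - u : ℝ) : ℂ) * (s - 1)) * ((u:ℝ):ℂ) ^ k by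
    rw [Complex.exp_add]; ring]
  rw [show Complex.exp ((T:ℂ) * s) * (Complex.exp (-(s * ((u:ℝ):ℂ))) * ((u:ℝ):ℂ) ^ k)
      = Complex.exp ((T:ℂ) * s + -(s * ((u:ℝ):ℂ))) * ((u:ℝ):ℂ) ^ k by
    rw [Complex.exp_add]; ring]
  congr 2
  push_cast
  ring

private lemma lemB_real {T : ℝ} (hT : 0 < T) (k : ℂ) {σ : ℝ} (hσ : 0 < σ) :
    ∫ u in Ioi T, Complex.exp (-((σ:ℂ) * u)) * (u:ℂ) ^ k
      = ((σ:ℂ)) ^ (-1 - k) * Complex.exp (-((σ:ℂ) * T))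
        * ∫ t in Ioi (0:ℝ), Complex.exp (-(t:ℂ)) * ((t:ℂ) + (σ:ℂ) * T) ^ k := by
  have hσ' : (σ:ℂ) ≠ 0 := Complex.ofReal_ne_zero.mpr hσ.ne'
  rw [← image_affine T σ hσ]
  rw [integral_image_eq_integral_abs_deriv_smul measurableSet_Ioi
    (f' := fun _ => 1 / σ) (fun t _ => (((hasDerivAt_id' t).div_const σ).const_add T).hasDerivWithinAt)
    (fun t _ v _ h => by
      have h2 : t / σ = v / σ := by linarith
      field_simp at h2
      exact h2)]
  rw [← MeasureTheory.integral_const_mul]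
  apply setIntegral_congr_fun measurableSet_Ioi
  intro t ht
  dsimp only
  have ht0 : (0:ℝ) < t := ht
  have hTt : T + t / σ = (σ * T + t) / σ := by field_simp
  have key : ((T + t / σ : ℝ) : ℂ) ^ k = ((σ * T + t : ℝ) : ℂ) ^ k * ((σ:ℂ)) ^ (-k) := by
    have h1 : ((T + t / σ : ℝ) : ℂ) = ((σ * T + t : ℝ) : ℂ) * ((σ⁻¹ : ℝ) : ℂ) := by
      rw [hTt]; push_cast; ring
    rw [h1, Complex.mul_cpow_ofReal_nonneg (by nlinarith) (by positivity)]
    congr 1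
    rw [Complex.ofReal_inv, Complex.inv_cpow _ _ ?_, ← Complex.cpow_neg]
    rw [Complex.arg_ofReal_of_nonneg hσ.le]
    exact Real.pi_ne_zero.symm
  have hsmul : |1 / σ| • (Complex.exp (-((σ:ℂ) * ((T + t / σ : ℝ) : ℂ))) * ((T + t / σ : ℝ) : ℂ) ^ k)
      = ((1/σ : ℝ) : ℂ) * (Complex.exp (-((σ:ℂ) * ((T + t / σ : ℝ) : ℂ))) * ((T + t / σ : ℝ) : ℂ) ^ k) := by
    rw [abs_of_pos (by positivity), Complex.real_smul]
  rw [hsmul, key]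
  have hexp : Complex.exp (-((σ:ℂ) * ((T + t / σ : ℝ) : ℂ)))
      = Complex.exp (-((σ:ℂ) * T)) * Complex.exp (-(t:ℂ)) := by
    rw [← Complex.exp_add]
    congr 1
    push_cast
    field_simp
    ring
  rw [hexp]
  have hpow : ((σ:ℂ)) ^ (-1 - k) = ((1/σ : ℝ):ℂ) * ((σ:ℂ)) ^ (-k) := by
    rw [sub_eq_add_neg, Complex.cpow_add _ _ hσ', Complex.cpow_neg_one]
    push_cast
    ring
  rw [hpow]
  have : ((σ * T + t : ℝ) : ℂ) = ((t:ℂ) + (σ:ℂ) * T) := by push_cast; ring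
  rw [this]
  ring

private lemma F_diff {T : ℝ} (hT : 0 < T) (k : ℂ) :
    DifferentiableOn ℂ (fun s => ∫ u in Ioi T, Complex.exp (-(s * u)) * (u:ℂ) ^ k)
      {s : ℂ | 0 < s.re} := by
  intro s₀ hs₀
  apply DifferentiableAt.differentiableWithinAt
  have hs₀' : 0 < s₀.re := hs₀
  set ε : ℝ := s₀.re / 2 with hεdef
  have hε0 : 0 < ε := half_pos hs₀'
  have hre : ∀ s ∈ Metric.ball s₀ ε, ε ≤ s.re := by
    intro s hs
    rw [Metric.mem_ball, Complex.dist_eq] at hs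
    have h1 : |(s - s₀).re| ≤ ‖(s - s₀)‖ := Complex.abs_re_le_norm _
    rw [Complex.sub_re] at h1
    have h2 := abs_lt.mp (lt_of_le_of_lt h1 hs)
    have := h2.1
    simp only [hεdef] at *
    linarith
  have hmeas : ∀ s : ℂ, AEStronglyMeasurable (fun u : ℝ => Complex.exp (-(s * u)) * (u:ℂ) ^ k)
      (volume.restrict (Ioi T)) :=
    fun s => ((Complex.measurable_exp.comp ((Complex.measurable_ofReal.const_mul s).neg)).mul
      ((measurable_cpow_const k).comp Complex.measurable_ofReal)).aestronglyMeasurable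
  have hmeas' : AEStronglyMeasurable (fun u : ℝ => Complex.exp (-(s₀ * u)) * -(u:ℂ) * (u:ℂ) ^ k)
      (volume.restrict (Ioi T)) := by
    apply Measurable.aestronglyMeasurable
    exact ((Complex.measurable_exp.comp ((Complex.measurable_ofReal.const_mul s₀).neg)).mul
      Complex.measurable_ofReal.neg).mul ((measurable_cpow_const k).comp Complex.measurable_ofReal)
  have hnorm : ∀ (s : ℂ) (u : ℝ), 0 < u → ‖Complex.exp (-(s * u)) * (u:ℂ) ^ k‖
      = Real.exp (-(s.re * u)) * u ^ k.re := by
    intro s u hu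
    rw [norm_mul, Complex.norm_exp,
      Complex.norm_cpow_eq_rpow_re_of_pos hu]
    congr 2
    simp [Complex.mul_re]
  have hint : Integrable (fun u : ℝ => Complex.exp (-(s₀ * u)) * (u:ℂ) ^ k)
      (volume.restrict (Ioi T)) := by
    apply Integrable.mono' (integrableOn_exp_rpow (ρ := k.re) (d := 0) hε0 (by simpa using hT))
      (hmeas s₀)
    filter_upwards [ae_restrict_mem measurableSet_Ioi] with u hu
    have hu0 : 0 < u := lt_trans hT hu
    rw [hnorm s₀ u hu0, add_zero]
    apply mul_le_mul_of_nonneg_right ?_ (Real.rpow_nonneg hu0.le _)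
    apply Real.exp_le_exp.2
    have hεle : ε ≤ s₀.re := by rw [hεdef]; linarith
    nlinarith
  have key := hasDerivAt_integral_of_dominated_loc_of_deriv_le (μ := volume.restrict (Ioi T))
    (F := fun s u => Complex.exp (-(s * u)) * (u:ℂ) ^ k)
    (F' := fun s u => Complex.exp (-(s * u)) * -(u:ℂ) * (u:ℂ) ^ k)
    (x₀ := s₀)
    (bound := fun u => Real.exp (-(ε * u)) * (u + 0) ^ (k.re + 1))
    (Metric.ball_mem_nhds s₀ hε0) (Filter.Eventually.of_forall hmeas) hint hmeas' ?_
    (integrableOn_exp_rpow hε0 (by simpa using hT)) ?_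
  · exact key.2.differentiableAt
  · filter_upwards [ae_restrict_mem measurableSet_Ioi] with u hu s hs
    have hu0 : 0 < u := lt_trans hT hu
    rw [norm_mul, norm_mul]
    have e1 : ‖Complex.exp (-(s * u))‖ = Real.exp (-(s.re * u)) := by
      rw [Complex.norm_exp]
      congr 1
      simp [Complex.mul_re]
    have e2 : ‖-(u:ℂ)‖ = u := by
      rw [norm_neg, Complex.norm_real, Real.norm_eq_abs, abs_of_pos hu0]
    have e3 : ‖(u:ℂ) ^ k‖ = u ^ k.re := Complex.norm_cpow_eq_rpow_re_of_pos hu0 k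
    rw [e1, e2, e3, add_zero, Real.rpow_add_one hu0.ne']
    have hexp : Real.exp (-(s.re * u)) ≤ Real.exp (-(ε * u)) := by
      apply Real.exp_le_exp.2
      have := hre s hs
      nlinarith
    have hA : (0:ℝ) ≤ u ^ k.re := Real.rpow_nonneg hu0.le _
    calc Real.exp (-(s.re * u)) * u * u ^ k.re
        ≤ Real.exp (-(ε * u)) * u * u ^ k.re := by
          apply mul_le_mul_of_nonneg_right (mul_le_mul_of_nonneg_right hexp hu0.le) hA
      _ = Real.exp (-(ε * u)) * (u ^ k.re * u) := by ring
  · filter_upwards [ae_restrict_mem measurableSet_Ioi] with u _ s _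
    exact ((hasDerivAt_mul_const ((u:ℝ):ℂ)).neg.cexp).mul_const _

private lemma H_diff {T : ℝ} (hT : 0 < T) (k : ℂ) :
    DifferentiableOn ℂ (fun s => ∫ t in Ioi (0:ℝ), Complex.exp (-(t:ℂ)) * ((t:ℂ) + s * T) ^ k)
      {s : ℂ | 0 < s.re} := by
  intro s₀ hs₀
  apply DifferentiableAt.differentiableWithinAt
  have hs₀' : 0 < s₀.re := hs₀
  set ε : ℝ := s₀.re / 2 with hεdef
  have hε0 : 0 < ε := half_pos hs₀'
  set M : ℝ := ‖s₀‖ + ε with hMdef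
  have hM0 : 0 < M := by
    have := norm_nonneg s₀
    rw [hMdef]; linarith
  have hMT : 0 < 0 + M * T := by positivity
  have hre : ∀ s ∈ Metric.ball s₀ ε, ε ≤ s.re := by
    intro s hs
    rw [Metric.mem_ball, Complex.dist_eq] at hs
    have h1 : |(s - s₀).re| ≤ ‖(s - s₀)‖ := Complex.abs_re_le_norm _
    rw [Complex.sub_re] at h1
    have h2 := abs_lt.mp (lt_of_le_of_lt h1 hs)
    have := h2.1
    linarith
  have habs : ∀ s ∈ Metric.ball s₀ ε, ‖s‖ ≤ M := by
    intro s hs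
    rw [Metric.mem_ball, Complex.dist_eq] at hs
    have h3 : ‖s‖ - ‖s₀‖ ≤ ‖(s - s₀)‖ := norm_sub_norm_le s s₀
    rw [hMdef]; linarith
  -- facts about w = t + s*T
  have hwre : ∀ (s : ℂ), ε ≤ s.re → ∀ t : ℝ, 0 < t → ε * T ≤ ((t:ℂ) + s * T).re := by
    intro s hsre t ht
    simp only [Complex.add_re, Complex.ofReal_re, Complex.mul_re, Complex.ofReal_im,
      mul_zero, sub_zero]
    nlinarith
  have hwl : ∀ (s : ℂ), ε ≤ s.re → ∀ t : ℝ, 0 < t → ε * T ≤ ‖((t:ℂ) + s * T)‖ :=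
    fun s hsre t ht => le_trans (hwre s hsre t ht) (Complex.re_le_norm _)
  have hwu : ∀ (s : ℂ), ‖s‖ ≤ M → ∀ t : ℝ, 0 < t →
      ‖((t:ℂ) + s * T)‖ ≤ t + M * T := by
    intro s hsM t ht
    calc ‖((t:ℂ) + s * T)‖ ≤ ‖(t:ℂ)‖ + ‖(s * ↑T)‖ :=
          norm_add_le _ _
      _ = |t| + ‖s‖ * |T| := by rw [norm_mul, Complex.norm_real, Real.norm_eq_abs, Complex.norm_real, Real.norm_eq_abs]
      _ ≤ t + M * T := by
          rw [abs_of_pos ht, abs_of_pos hT]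
          have := mul_le_mul_of_nonneg_right hsM hT.le
          linarith
  have hεT : 0 < ε * T := by positivity
  -- the uniform cpow bound
  have hbound : ∀ (y : ℂ) (s : ℂ), ε ≤ s.re → ‖s‖ ≤ M → ∀ t : ℝ, 0 < t →
      ‖((t:ℂ) + s * T) ^ y‖ ≤ Real.exp (Real.pi * |y.im|) * ((ε*T) ^ y.re + (t + M*T) ^ y.re) :=
    fun y s h1 h2 t ht => norm_cpow_le_aux hεT (hwl s h1 t ht) (hwu s h2 t ht)
  have hmeas : ∀ s : ℂ, AEStronglyMeasurable (fun t : ℝ => Complex.exp (-(t:ℂ)) * ((t:ℂ) + s * T) ^ k)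
      (volume.restrict (Ioi (0:ℝ))) :=
    fun s => ((Complex.measurable_exp.comp Complex.measurable_ofReal.neg).mul
      ((measurable_cpow_const k).comp (Complex.measurable_ofReal.add_const (s * T)))).aestronglyMeasurable
  have hexpnorm : ∀ t : ℝ, ‖Complex.exp (-(t:ℂ))‖ = Real.exp (-t) := by
    intro t
    rw [Complex.norm_exp]
    simp
  -- integrability of the basic bounds
  have hint1 : Integrable (fun t : ℝ => Real.exp (-(1*t)) * (t + M*T) ^ (0:ℝ))
      (volume.restrict (Ioi (0:ℝ))) := integrableOn_exp_rpow one_pos hMT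
  have hint2 : ∀ ρ : ℝ, Integrable (fun t : ℝ => Real.exp (-(1*t)) * (t + M*T) ^ ρ)
      (volume.restrict (Ioi (0:ℝ))) := fun ρ => integrableOn_exp_rpow one_pos hMT
  have hint : Integrable (fun t : ℝ => Complex.exp (-(t:ℂ)) * ((t:ℂ) + s₀ * T) ^ k)
      (volume.restrict (Ioi (0:ℝ))) := by
    set E : ℝ := Real.exp (Real.pi * |k.im|)
    have hE : 0 < E := Real.exp_pos _
    apply Integrable.mono' (((hint2 0).const_mul (E * (ε*T) ^ k.re)).add ((hint2 k.re).const_mul E))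
      (hmeas s₀)
    filter_upwards [ae_restrict_mem measurableSet_Ioi] with t ht
    have ht0 : (0:ℝ) < t := ht
    rw [norm_mul, hexpnorm t]
    have h := hbound k s₀ (by rw [hεdef]; linarith) (by rw [hMdef]; linarith [norm_nonneg s₀]) t ht0
    calc Real.exp (-t) * ‖((t:ℂ) + s₀ * T) ^ k‖
        ≤ Real.exp (-t) * (E * ((ε*T) ^ k.re + (t + M*T) ^ k.re)) :=
          mul_le_mul_of_nonneg_left h (Real.exp_pos _).le
      _ = E * (ε*T) ^ k.re * (Real.exp (-(1*t)) * (t + M*T) ^ (0:ℝ))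
            + E * (Real.exp (-(1*t)) * (t + M*T) ^ k.re) := by
          rw [Real.rpow_zero, one_mul]
          ring
  have hmeas' : AEStronglyMeasurable
      (fun t : ℝ => Complex.exp (-(t:ℂ)) * (k * ((t:ℂ) + s₀ * T) ^ (k-1) * (T:ℂ)))
      (volume.restrict (Ioi (0:ℝ))) := by
    apply Measurable.aestronglyMeasurable
    exact (Complex.measurable_exp.comp Complex.measurable_ofReal.neg).mul
      ((((measurable_cpow_const (k-1)).comp (Complex.measurable_ofReal.add_const (s₀ * T))).const_mul k).mul_const (T:ℂ))
  set E' : ℝ := Real.exp (Real.pi * |(k-1).im|) with hE'def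
  have key := hasDerivAt_integral_of_dominated_loc_of_deriv_le (μ := volume.restrict (Ioi (0:ℝ)))
    (F := fun s t => Complex.exp (-(t:ℂ)) * ((t:ℂ) + s * T) ^ k)
    (F' := fun s t => Complex.exp (-(t:ℂ)) * (k * ((t:ℂ) + s * T) ^ (k-1) * (T:ℂ)))
    (x₀ := s₀)
    (bound := fun t => ‖k‖ * T * E' * (ε*T) ^ (k-1).re * (Real.exp (-(1*t)) * (t + M*T) ^ (0:ℝ))
      + ‖k‖ * T * E' * (Real.exp (-(1*t)) * (t + M*T) ^ ((k-1).re)))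
    (Metric.ball_mem_nhds s₀ hε0) (Filter.Eventually.of_forall hmeas) hint hmeas' ?_
    (((hint2 0).const_mul _).add ((hint2 (k-1).re).const_mul _)) ?_
  · exact key.2.differentiableAt
  · filter_upwards [ae_restrict_mem measurableSet_Ioi] with t ht s hs
    have ht0 : (0:ℝ) < t := ht
    have h := hbound (k-1) s (hre s hs) (habs s hs) t ht0
    rw [norm_mul, hexpnorm t, norm_mul, norm_mul]
    have hTn : ‖(T:ℂ)‖ = T := by rw [Complex.norm_real, Real.norm_eq_abs, abs_of_pos hT]
    rw [hTn]
    have hkn : ‖k‖ = ‖k‖ := rfl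
    calc Real.exp (-t) * (‖k‖ * ‖((t:ℂ) + s * T) ^ (k-1)‖ * T)
        ≤ Real.exp (-t) * (‖k‖ * (E' * ((ε*T) ^ (k-1).re + (t + M*T) ^ (k-1).re)) * T) := by
          apply mul_le_mul_of_nonneg_left ?_ (Real.exp_pos _).le
          apply mul_le_mul_of_nonneg_right ?_ hT.le
          exact mul_le_mul_of_nonneg_left h (norm_nonneg k)
      _ = ‖k‖ * T * E' * (ε*T) ^ (k-1).re * (Real.exp (-(1*t)) * (t + M*T) ^ (0:ℝ))
            + ‖k‖ * T * E' * (Real.exp (-(1*t)) * (t + M*T) ^ ((k-1).re)) := by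
          rw [Real.rpow_zero, one_mul, hkn]
          ring
  · filter_upwards [ae_restrict_mem measurableSet_Ioi] with t ht s hs
    have ht0 : (0:ℝ) < t := ht
    have hslit : ((t:ℂ) + s * T) ∈ Complex.slitPlane := by
      apply Complex.mem_slitPlane_iff.mpr
      left
      calc (0:ℝ) < ε * T := hεT
        _ ≤ ((t:ℂ) + s * T).re := hwre s (hre s hs) t ht0
    exact (((hasDerivAt_mul_const ((T:ℝ):ℂ)).const_add (t:ℂ)).cpow_const hslit).const_mul _

private lemma lemB {T : ℝ} (hT : 0 < T) (k : ℂ) {s : ℂ} (hs : 0 < s.re) :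
    ∫ u in Ioi T, Complex.exp (-(s * u)) * (u:ℂ) ^ k
      = s ^ (-1 - k) * Complex.exp (-(s * T))
        * ∫ t in Ioi (0:ℝ), Complex.exp (-(t:ℂ)) * ((t:ℂ) + s * T) ^ k := by
  set U : Set ℂ := {z : ℂ | 0 < z.re} with hU
  have hUopen : IsOpen U := isOpen_lt continuous_const Complex.continuous_re
  have hUconn : IsPreconnected U := (convex_halfSpace_re_gt 0).isPreconnected
  set F := fun z : ℂ => ∫ u in Ioi T, Complex.exp (-(z * u)) * (u:ℂ) ^ k with hF
  set G := fun z : ℂ => z ^ (-1 - k) * Complex.exp (-(z * T))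
      * ∫ t in Ioi (0:ℝ), Complex.exp (-(t:ℂ)) * ((t:ℂ) + z * T) ^ k with hG
  have hFdiff : DifferentiableOn ℂ F U := F_diff hT k
  have hGdiff : DifferentiableOn ℂ G U := by
    refine DifferentiableOn.mul (DifferentiableOn.mul ?_ ?_) ?_
    · intro z hz
      have hslit : z ∈ Complex.slitPlane := Or.inl hz
      exact ((hasDerivAt_id z).cpow_const hslit).differentiableAt.differentiableWithinAt
    · apply Differentiable.differentiableOn
      exact Complex.differentiable_exp.comp ((differentiable_id.mul_const ((T:ℝ):ℂ)).neg)
    · exact H_diff hT k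
  have hFan := hFdiff.analyticOnNhd hUopen
  have hGan := hGdiff.analyticOnNhd hUopen
  have h1U : (1:ℂ) ∈ U := by simp [hU]
  set z : ℕ → ℂ := fun n => ((1 + ((n:ℝ)+1)⁻¹ : ℝ) : ℂ) with hz
  have htend : Tendsto z atTop (𝓝[≠] (1:ℂ)) := by
    apply tendsto_nhdsWithin_of_tendsto_nhds_of_eventually_within
    · have hr : Tendsto (fun n : ℕ => (1 + ((n:ℝ)+1)⁻¹ : ℝ)) atTop (𝓝 1) := by
        have := tendsto_one_div_add_atTop_nhds_zero_nat (𝕜 := ℝ)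
        simp only [one_div] at this
        simpa using tendsto_const_nhds.add this
      have := (Complex.continuous_ofReal.tendsto 1).comp hr
      exact this
    · apply Filter.Eventually.of_forall
      intro n
      simp only [hz, mem_compl_iff, mem_singleton_iff]
      intro h
      have : (1 + ((n:ℝ)+1)⁻¹ : ℝ) = 1 := by exact_mod_cast h
      have hpos : (0:ℝ) < ((n:ℝ)+1)⁻¹ := by positivity
      linarith
  have heach : ∀ n : ℕ, F (z n) = G (z n) := by
    intro n
    have hσ : (0:ℝ) < 1 + ((n:ℝ)+1)⁻¹ := by positivity
    exact lemB_real hT k hσ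
  have hfreq : ∃ᶠ w in 𝓝[≠] (1:ℂ), F w = G w :=
    htend.frequently ((Filter.Eventually.of_forall heach).frequently)
  have heq : EqOn F G U :=
    hFan.eqOn_of_preconnected_of_frequently_eq hGan hUconn h1U hfreq
  exact heq hs


open MeasureTheory

theorem stmt4 (a : ℝ) (ha0 : 0 < a) (ha1 : a < 1) (b c k m : ℂ)
    (hb : 0 < b.re) (hm : 0 < m.re) (hc : ‖c‖ < 1) :
    (∫ x in (0:ℝ)..1, (x:ℂ) ^ (m - 1) * (-(Complex.log ((a:ℂ) * (x:ℂ)))) ^ k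
        * Complex.log (1 + c * (x:ℂ) ^ b))
    = ∑' j : ℕ, (a:ℂ) ^ (-(b * (1 + (j:ℂ))) - m) * (-c) ^ j * c
        * (b + b * (j:ℂ) + m) ^ (-1 - k)
        * uGamma (1 + k) (-((b + b * (j:ℂ) + m) * Complex.log (a:ℂ))) / (1 + (j:ℂ)) := by
  set T : ℝ := -Real.log a with hTdef
  have hT : 0 < T := by
    rw [hTdef]
    have := Real.log_neg ha0 ha1
    linarith
  have hloga : Complex.log ((a:ℂ)) = -(T:ℂ) := by
    rw [← Complex.ofReal_log ha0.le, hTdef]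
    push_cast
    ring
  set A : ℝ → ℂ := fun x => (x:ℂ) ^ (m - 1) * (-(Complex.log ((a:ℂ) * (x:ℂ)))) ^ k with hAdef
  set f : ℕ → ℝ → ℂ := fun j x => A x * ((-c) ^ j * c * ((x:ℂ) ^ b) ^ (j+1) / ((j:ℂ) + 1))
    with hfdef
  have hAmeas : Measurable A := by
    apply Measurable.mul
    · exact (measurable_cpow_const (m-1)).comp Complex.measurable_ofReal
    · exact (measurable_cpow_const k).comp
        ((Complex.measurable_log.comp (Complex.measurable_ofReal.const_mul (a:ℂ))).neg)
  have hfmeas : ∀ j : ℕ, Measurable (f j) := by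
    intro j
    apply hAmeas.mul
    apply Measurable.div_const
    apply Measurable.const_mul
    exact ((measurable_cpow_const b).comp Complex.measurable_ofReal).pow_const (j+1)
  have hnormA : ∀ x ∈ Ioc (0:ℝ) 1, ‖A x‖ = x ^ (m.re - 1) * (T - Real.log x) ^ k.re := by
    intro x hx
    have hx0 : 0 < x := hx.1
    have hlog : -(Complex.log ((a:ℂ) * (x:ℂ))) = ((T - Real.log x : ℝ) : ℂ) := by
      rw [← Complex.ofReal_mul, ← Complex.ofReal_log (by positivity : (0:ℝ) ≤ a * x),
        Real.log_mul ha0.ne' hx0.ne', hTdef]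
      push_cast
      ring
    have hTlx : 0 < T - Real.log x := by
      have : Real.log x ≤ 0 := Real.log_nonpos hx0.le hx.2
      linarith
    rw [hAdef]
    simp only
    rw [norm_mul, hlog,
      Complex.norm_cpow_eq_rpow_re_of_pos hx0, Complex.norm_cpow_eq_rpow_re_of_pos hTlx,
      Complex.sub_re, Complex.one_re]
  have hAint : IntegrableOn A (Ioo (0:ℝ) 1) := by
    rw [integrableOn_Ioo_iff T]
    apply Integrable.mono'
      ((integrableOn_exp_rpow (ε := m.re) (c := T) (d := 0) (ρ := k.re) hm
        (by simpa using hT)).const_mul (Real.exp (T * m.re)))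
    · apply Measurable.aestronglyMeasurable
      exact (Real.measurable_exp.comp (measurable_const.sub measurable_id)).smul
        (hAmeas.comp (Real.measurable_exp.comp (measurable_const.sub measurable_id)))
    · filter_upwards [ae_restrict_mem measurableSet_Ioi] with u hu
      have huT : T < u := hu
      have hu0 : 0 < u := lt_trans hT huT
      have hxm : Real.exp (T - u) ∈ Ioc (0:ℝ) 1 :=
        ⟨Real.exp_pos _, by rw [← Real.exp_zero]; exact Real.exp_le_exp.2 (by linarith)⟩
      rw [norm_smul, hnormA _ hxm, Real.log_exp, Real.norm_eq_abs,
        abs_of_pos (Real.exp_pos _), sub_sub_cancel]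
      have h1 : Real.exp (T - u) ^ (m.re - 1) = Real.exp ((T - u) * (m.re - 1)) := by
        rw [Real.rpow_def_of_pos (Real.exp_pos _), Real.log_exp]
      rw [h1, add_zero]
      apply le_of_eq
      rw [show Real.exp (T-u) * (Real.exp ((T-u)*(m.re-1)) * u ^ k.re)
          = (Real.exp (T-u) * Real.exp ((T-u)*(m.re-1))) * u ^ k.re from by ring,
        ← Real.exp_add,
        show Real.exp (T*m.re) * (Real.exp (-(m.re*u)) * u ^ k.re)
          = (Real.exp (T*m.re) * Real.exp (-(m.re*u))) * u ^ k.re from by ring,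
        ← Real.exp_add]
      congr 2
      ring
  have hAintIoc : IntegrableOn A (Ioc (0:ℝ) 1) :=
    (integrableOn_Ioc_iff_integrableOn_Ioo).mpr hAint
  -- pointwise bound for the series terms
  have hfb : ∀ j : ℕ, ∀ x ∈ Ioc (0:ℝ) 1, ‖f j x‖ ≤ ‖c‖ ^ (j+1) * ‖A x‖ := by
    intro j x hx
    have hx0 : 0 < x := hx.1
    rw [hfdef]
    simp only
    rw [norm_mul, mul_comm (‖c‖ ^ (j+1))]
    apply mul_le_mul_of_nonneg_left ?_ (norm_nonneg _)
    rw [norm_div, norm_mul, norm_mul, norm_pow, norm_pow, norm_neg]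
    have h1 : ‖(x:ℂ) ^ b‖ ≤ 1 := by
      rw [Complex.norm_cpow_eq_rpow_re_of_pos hx0]
      exact Real.rpow_le_one hx0.le hx.2 hb.le
    have h2 : (1:ℝ) ≤ ‖(j:ℂ) + 1‖ := by
      have : ((j:ℂ) + 1) = ((j+1 : ℕ) : ℂ) := by push_cast; ring
      rw [this, Complex.norm_natCast]
      exact_mod_cast Nat.succ_le_succ (Nat.zero_le j)
    calc ‖c‖ ^ j * ‖c‖ * ‖(x:ℂ) ^ b‖ ^ (j+1) / ‖(j:ℂ) + 1‖
        ≤ ‖c‖ ^ j * ‖c‖ * 1 / 1 := by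
          apply div_le_div₀ (by positivity) ?_ one_pos h2
          apply mul_le_mul_of_nonneg_left ?_ (by positivity)
          exact pow_le_one₀ (norm_nonneg _) h1
      _ = ‖c‖ ^ (j+1) := by rw [pow_succ]; ring
  -- the series expansion of the integrand
  have hseries : ∀ x ∈ Ioc (0:ℝ) 1,
      A x * Complex.log (1 + c * (x:ℂ) ^ b) = ∑' j : ℕ, f j x := by
    intro x hx
    have hx0 : 0 < x := hx.1
    have hz : ‖c * (x:ℂ) ^ b‖ < 1 := by
      rw [norm_mul]
      have h1 : ‖(x:ℂ) ^ b‖ ≤ 1 := by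
        rw [Complex.norm_cpow_eq_rpow_re_of_pos hx0]
        exact Real.rpow_le_one hx0.le hx.2 hb.le
      calc ‖c‖ * ‖(x:ℂ) ^ b‖ ≤ ‖c‖ * 1 := mul_le_mul_of_nonneg_left h1 (norm_nonneg _)
        _ = ‖c‖ := mul_one _
        _ < 1 := hc
    have h := Complex.hasSum_taylorSeries_log hz
    have h1 : HasSum (fun j : ℕ => (-1:ℂ) ^ (j+1+1) * (c * (x:ℂ) ^ b) ^ (j+1) / (↑(j+1)))
        (Complex.log (1 + c * (x:ℂ) ^ b)) := by
      apply (hasSum_nat_add_iff (f := fun n : ℕ => (-1:ℂ) ^ (n+1) * (c * (x:ℂ) ^ b) ^ n / n) 1).mpr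
      simpa using h
    have h2 := h1.mul_left (A x)
    rw [← h2.tsum_eq]
    apply tsum_congr
    intro j
    rw [hfdef]
    simp only
    rw [mul_pow]
    have hsgn : (-1:ℂ) ^ (j+1+1) = (-1:ℂ) ^ j := by
      rw [pow_succ, pow_succ]
      ring
    rw [hsgn]
    have hnc : (-1:ℂ) ^ j * c ^ (j+1) = (-c) ^ j * c := by
      rw [neg_pow, pow_succ]
      ring
    push_cast
    ring
  -- main computation
  rw [intervalIntegral.integral_of_le zero_le_one]
  have hintg : ∫ x in Ioc (0:ℝ) 1, (x:ℂ) ^ (m - 1) * (-(Complex.log ((a:ℂ) * (x:ℂ)))) ^ k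
      * Complex.log (1 + c * (x:ℂ) ^ b) = ∫ x in Ioc (0:ℝ) 1, ∑' j : ℕ, f j x := by
    apply setIntegral_congr_fun measurableSet_Ioc
    intro x hx
    exact hseries x hx
  rw [hintg]
  -- interchange sum and integral
  have hJ : 0 ≤ ∫ x in Ioc (0:ℝ) 1, ‖A x‖ := by positivity
  set J : ℝ := ∫ x in Ioc (0:ℝ) 1, ‖A x‖ with hJdef
  have hsummable : Summable (fun j : ℕ => ‖c‖ ^ (j+1) * J) := by
    have : (fun j : ℕ => ‖c‖ ^ (j+1) * J) = fun j : ℕ => ‖c‖ ^ j * (‖c‖ * J) := by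
      funext j
      rw [pow_succ]
      ring
    rw [this]
    exact (summable_geometric_of_lt_one (norm_nonneg c) hc).mul_right _
  have hswap : ∫ x in Ioc (0:ℝ) 1, ∑' j : ℕ, f j x = ∑' j : ℕ, ∫ x in Ioc (0:ℝ) 1, f j x := by
    apply MeasureTheory.integral_tsum
    · exact fun j => ((hfmeas j).aestronglyMeasurable)
    · apply ne_top_of_le_ne_top (b := ∑' j : ℕ, ENNReal.ofReal (‖c‖ ^ (j+1) * J))
      · rw [← ENNReal.ofReal_tsum_of_nonneg (fun j => by positivity) hsummable]
        exact ENNReal.ofReal_ne_top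
      · apply ENNReal.tsum_le_tsum
        intro j
        have hle : ∫⁻ x in Ioc (0:ℝ) 1, ‖f j x‖₊
            ≤ ∫⁻ x in Ioc (0:ℝ) 1, ENNReal.ofReal (‖c‖ ^ (j+1) * ‖A x‖) := by
          apply lintegral_mono_ae
          filter_upwards [ae_restrict_mem measurableSet_Ioc] with x hx
          rw [← enorm_eq_nnnorm, ← ofReal_norm]
          exact ENNReal.ofReal_le_ofReal (hfb j x hx)
        have heq2 : ∫⁻ x in Ioc (0:ℝ) 1, ENNReal.ofReal (‖c‖ ^ (j+1) * ‖A x‖)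
            = ENNReal.ofReal (∫ x in Ioc (0:ℝ) 1, ‖c‖ ^ (j+1) * ‖A x‖) := by
          rw [← MeasureTheory.ofReal_integral_eq_lintegral_ofReal]
          · exact hAintIoc.norm.const_mul _
          · filter_upwards with x using by positivity
        rw [heq2, MeasureTheory.integral_const_mul] at hle
        exact hle
  rw [hswap]
  apply tsum_congr
  intro j
  set sj : ℂ := b + b * (j:ℂ) + m with hsdef
  have hsre : 0 < sj.re := by
    rw [hsdef]
    simp only [Complex.add_re, Complex.mul_re, Complex.natCast_re, Complex.natCast_im,
      mul_zero, sub_zero]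
    have h0j : (0:ℝ) ≤ (j:ℝ) := Nat.cast_nonneg j
    nlinarith
  have hcomb : ∀ x ∈ Ioo (0:ℝ) 1, f j x
      = ((-c) ^ j * c / ((j:ℂ) + 1))
        * ((x:ℂ) ^ (sj - 1) * (-(Complex.log ((a:ℂ) * (x:ℂ)))) ^ k) := by
    intro x hx
    have hx0 : ((x:ℝ):ℂ) ≠ 0 := Complex.ofReal_ne_zero.mpr hx.1.ne'
    rw [hfdef, hAdef]
    simp only
    have hpow : (x:ℂ) ^ (m - 1) * ((x:ℂ) ^ b) ^ (j+1) = (x:ℂ) ^ (sj - 1) := by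
      rw [Complex.cpow_def_of_ne_zero hx0, Complex.cpow_def_of_ne_zero hx0,
        Complex.cpow_def_of_ne_zero hx0, ← Complex.exp_nat_mul, ← Complex.exp_add]
      congr 1
      rw [hsdef]
      push_cast
      ring
    calc (x:ℂ) ^ (m-1) * (-(Complex.log ((a:ℂ) * (x:ℂ)))) ^ k
          * ((-c) ^ j * c * ((x:ℂ) ^ b) ^ (j+1) / ((j:ℂ)+1))
        = ((-c) ^ j * c / ((j:ℂ)+1))
          * (((x:ℂ) ^ (m-1) * ((x:ℂ) ^ b) ^ (j+1)) * (-(Complex.log ((a:ℂ) * (x:ℂ)))) ^ k) := by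
          ring
      _ = _ := by rw [hpow]
  rw [MeasureTheory.integral_Ioc_eq_integral_Ioo,
    setIntegral_congr_fun measurableSet_Ioo hcomb, MeasureTheory.integral_const_mul,
    lemA ha0 sj k, ← hTdef, lemB hT k hsre]
  have hug : uGamma (1 + k) (-(sj * Complex.log ((a:ℝ):ℂ)))
      = Complex.exp (-(sj * (T:ℂ)))
        * ∫ t in Ioi (0:ℝ), Complex.exp (-(t:ℂ)) * ((t:ℂ) + sj * (T:ℂ)) ^ k := by
    rw [uGamma, hloga]
    rw [show -(sj * -(T:ℂ)) = sj * (T:ℂ) from by ring,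
      show (1:ℂ) + k - 1 = k from by ring]
  have hexp : (a:ℂ) ^ (-(b * (1 + (j:ℂ))) - m) = (a:ℂ) ^ (-sj) := by
    congr 1
    rw [hsdef]
    ring
  rw [hexp, hug]
  ring
end

section
/- Let a ∈ ℝ with 0 < a < 1, let n ∈ ℕ, and let b, k, m ∈ ℂ with Re(m) > −1. Then ∫₀¹ x^m (1 + b x)^n (log(1/(a x)))^k dx = Σ_{j=1}^{n+1} binom(n, j−1) · b^{j−1} · a^{−(j+m)} · Γ(1+k, −(j+m) log a) / (j+m)^{k+1}, where binom(n, j−1) is the ordinary binomial coefficient. -/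
open MeasureTheory

namespace Stmt6Aux

open MeasureTheory Set Filter Asymptotics Real

lemma auxBigO (j : ℕ) (p c ε : ℝ) (hε : 0 < ε) :
    (fun u : ℝ => u ^ j * (u + c) ^ p * Real.exp (-ε * u)) =O[atTop]
      fun u => Real.exp (-(ε / 2) * u) := by
  have h1 : Tendsto (fun u : ℝ => u ^ (j : ℝ) * Real.exp (-(ε / 4) * u)) atTop (nhds 0) :=
    tendsto_rpow_mul_exp_neg_mul_atTop_nhds_zero _ _ (by positivity)
  have h2 : Tendsto (fun u : ℝ => (u + c) ^ p * Real.exp (-(ε / 4) * (u + c))) atTop (nhds 0) :=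
    (tendsto_rpow_mul_exp_neg_mul_atTop_nhds_zero p (ε / 4) (by positivity)).comp
      (tendsto_atTop_add_const_right atTop c tendsto_id)
  have h3 : Tendsto (fun u : ℝ =>
      (u ^ (j : ℝ) * Real.exp (-(ε / 4) * u)) * ((u + c) ^ p * Real.exp (-(ε / 4) * (u + c)))
        * Real.exp (ε / 4 * c)) atTop (nhds 0) := by
    simpa using (h1.mul h2).mul_const (Real.exp (ε / 4 * c))
  refine IsLittleO.isBigO ?_
  rw [isLittleO_iff_tendsto (fun u h => absurd h (Real.exp_ne_zero _))]
  refine h3.congr (fun u => ?_)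
  rw [Real.rpow_natCast, eq_div_iff (Real.exp_ne_zero _)]
  rw [show (-ε*u) = (-(ε/4)*u + -(ε/4)*(u+c)) + (ε/4*c + -(ε/2)*u) by ring, Real.exp_add,
    Real.exp_add, Real.exp_add]
  ring

lemma integrableAux (j : ℕ) (p c ε : ℝ) (hc : 0 < c) (hε : 0 < ε) :
    IntegrableOn (fun u : ℝ => u ^ j * (u + c) ^ p * Real.exp (-ε * u)) (Ioi 0) := by
  refine integrable_of_isBigO_exp_neg (b := ε / 2) (by positivity) ?_ (auxBigO j p c ε hε)
  refine ((continuousOn_id.pow j).mul ?_).mul (Real.continuous_exp.comp (by fun_prop)).continuousOn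
  refine ContinuousOn.rpow_const (by fun_prop) (fun x hx => Or.inl ?_)
  have : (0:ℝ) ≤ x := hx
  positivity

open Complex in
lemma cpow_norm_bound (k : ℂ) {w : ℂ} {A B : ℝ} (hA : 0 < A) (h1 : A ≤ ‖w‖)
    (h2 : ‖w‖ ≤ B) :
    ‖w ^ k‖ ≤ Real.exp (π * |k.im|) * (A ^ k.re + B ^ k.re) := by
  have hw : w ≠ 0 := by
    intro h; rw [h] at h1; simp at h1; linarith
  have hB : 0 < B := hA.trans_le (h1.trans h2)
  rw [Complex.norm_cpow_of_ne_zero hw, div_eq_mul_inv, ← Real.exp_neg]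
  have harg : Real.exp (-(w.arg * k.im)) ≤ Real.exp (π * |k.im|) := by
    apply Real.exp_le_exp.2
    calc -(w.arg * k.im) ≤ |w.arg * k.im| := neg_le_abs _
      _ = |w.arg| * |k.im| := abs_mul _ _
      _ ≤ π * |k.im| := by
          have := Complex.abs_arg_le_pi w
          have : |k.im| ≥ 0 := abs_nonneg _
          nlinarith [Complex.abs_arg_le_pi w, abs_nonneg k.im]
  have habs : ‖w‖ ^ k.re ≤ A ^ k.re + B ^ k.re := by
    rcases le_or_gt 0 k.re with h | h
    · have := Real.rpow_le_rpow (norm_nonneg w) h2 h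
      have hA' : (0:ℝ) ≤ A ^ k.re := (Real.rpow_pos_of_pos hA _).le
      linarith
    · have := Real.rpow_le_rpow_of_nonpos hA h1 h.le
      have hB' : (0:ℝ) ≤ B ^ k.re := (Real.rpow_pos_of_pos hB _).le
      linarith
  calc ‖w‖ ^ k.re * Real.exp (-(w.arg * k.im))
      ≤ (A ^ k.re + B ^ k.re) * Real.exp (π * |k.im|) := by
        apply mul_le_mul habs harg (Real.exp_pos _).le
        positivity
    _ = Real.exp (π * |k.im|) * (A ^ k.re + B ^ k.re) := mul_comm _ _

noncomputable def Fi (c : ℝ) (k μ : ℂ) : ℂ :=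
  ∫ u in Set.Ioi (0:ℝ), Complex.exp (-(μ * u)) * ((u:ℂ) + c) ^ k

noncomputable def Gi (c : ℝ) (k μ : ℂ) : ℂ :=
  ∫ t in Set.Ioi (0:ℝ), Complex.exp (-(t:ℂ)) * ((t:ℂ) + μ * c) ^ k

lemma Fi_cont (c : ℝ) (hc : 0 < c) (k μ : ℂ) :
    ContinuousOn (fun u : ℝ => Complex.exp (-(μ * u)) * ((u:ℂ) + c) ^ k) (Set.Ici 0) := by
  apply ContinuousOn.mul
  · exact (Complex.continuous_exp.comp (by fun_prop)).continuousOn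
  · apply ContinuousOn.cpow (by fun_prop) continuousOn_const
    intro x hx
    have hx : (0:ℝ) ≤ x := hx
    exact Or.inl (by simpa using by positivity)

lemma norm_Fi_integrand (c : ℝ) (hc : 0 < c) (k μ : ℂ) {u : ℝ} (hu : 0 < u) :
    ‖Complex.exp (-(μ * u)) * ((u:ℂ) + c) ^ k‖ = Real.exp (-(μ.re * u)) * (u + c) ^ k.re := by
  rw [norm_mul, Complex.norm_exp]
  have : ((u:ℂ) + c) = (((u + c : ℝ)):ℂ) := by push_cast; ring
  rw [this, Complex.norm_cpow_eq_rpow_re_of_pos (by positivity)]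
  congr 1
  simp [Complex.mul_re]

lemma Fi_integrable (c : ℝ) (hc : 0 < c) (k μ : ℂ) (hμ : 0 < μ.re) :
    IntegrableOn (fun u : ℝ => Complex.exp (-(μ * u)) * ((u:ℂ) + c) ^ k) (Set.Ioi 0) := by
  have hb := integrableAux 0 k.re c μ.re hc hμ
  refine Integrable.mono' (by simp at hb; exact hb)
    (((Fi_cont c hc k μ).mono Set.Ioi_subset_Ici_self).aestronglyMeasurable measurableSet_Ioi) ?_
  filter_upwards [ae_restrict_mem measurableSet_Ioi] with u hu
  rw [norm_Fi_integrand c hc k μ hu]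
  exact le_of_eq (by ring_nf)

lemma Gi_cont (c : ℝ) (hc : 0 < c) (k μ : ℂ) (hμ : 0 < μ.re) :
    ContinuousOn (fun t : ℝ => Complex.exp (-(t:ℂ)) * ((t:ℂ) + μ * c) ^ k) (Set.Ici 0) := by
  apply ContinuousOn.mul
  · exact (Complex.continuous_exp.comp (by fun_prop)).continuousOn
  · apply ContinuousOn.cpow (by fun_prop) continuousOn_const
    intro x hx
    have hx : (0:ℝ) ≤ x := hx
    refine Or.inl ?_
    have : ((x:ℂ) + μ * c).re = x + μ.re * c := by simp [Complex.add_re, Complex.mul_re]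
    rw [this]
    nlinarith [mul_pos hμ hc]

lemma Gi_integrable (c : ℝ) (hc : 0 < c) (k μ : ℂ) (hμ : 0 < μ.re) :
    IntegrableOn (fun t : ℝ => Complex.exp (-(t:ℂ)) * ((t:ℂ) + μ * c) ^ k) (Set.Ioi 0) := by
  have hμ0 : μ ≠ 0 := fun h => by simp [h] at hμ
  set M := ‖μ‖ with hM
  have hM0 : 0 < M := norm_pos_iff.mpr hμ0
  have hμM : μ.re ≤ M := (le_abs_self _).trans (Complex.abs_re_le_norm μ)
  have hb1 := integrableAux 0 k.re (c * μ.re) 1 (by positivity) one_pos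
  have hb2 := integrableAux 0 k.re (c * M) 1 (by positivity) one_pos
  have hbound : IntegrableOn (fun t : ℝ =>
      Real.exp (π * |k.im|) * (((t + c * μ.re) ^ k.re + (t + c * M) ^ k.re) * Real.exp (-1 * t)))
      (Set.Ioi 0) := by
    refine Integrable.const_mul ?_ _
    have := (hb1.add hb2)
    simp [add_mul] at this ⊢; exact this
  refine Integrable.mono' hbound
    (((Gi_cont c hc k μ hμ).mono Set.Ioi_subset_Ici_self).aestronglyMeasurable measurableSet_Ioi) ?_
  filter_upwards [ae_restrict_mem measurableSet_Ioi] with t ht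
  have ht : (0:ℝ) < t := ht
  rw [norm_mul, Complex.norm_exp]
  have hre : ((t:ℂ) + μ * c).re = t + c * μ.re := by simp [Complex.mul_re]; ring
  have h1 : t + c * μ.re ≤ ‖((t:ℂ) + μ * c)‖ := by
    rw [← hre]; exact (le_abs_self _).trans (Complex.abs_re_le_norm _)
  have h2 : ‖((t:ℂ) + μ * c)‖ ≤ t + c * M := by
    calc ‖((t:ℂ) + μ * c)‖ ≤ ‖(t:ℂ)‖ + ‖(μ * c)‖ :=
          norm_add_le _ _
      _ = t + c * M := by
          rw [norm_mul, Complex.norm_real, Complex.norm_real, Real.norm_eq_abs, Real.norm_eq_abs, abs_of_pos ht, abs_of_pos hc]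
          ring
  have hN := cpow_norm_bound k (by positivity) h1 h2
  calc Real.exp ((-(t:ℂ)).re) * ‖((t:ℂ) + μ * c) ^ k‖
      ≤ Real.exp (-t) * (Real.exp (π * |k.im|) * ((t + c * μ.re) ^ k.re + (t + c * M) ^ k.re)) := by
        simp only [Complex.neg_re, Complex.ofReal_re]
        exact mul_le_mul_of_nonneg_left hN (Real.exp_pos _).le
    _ = Real.exp (π * |k.im|) * (((t + c * μ.re) ^ k.re + (t + c * M) ^ k.re) * Real.exp (-1 * t)) := by
        ring_nf

lemma ball_re {μ₀ μ : ℂ} {ε : ℝ} (h : μ ∈ Metric.ball μ₀ ε) : μ₀.re - ε < μ.re := by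
  have := Complex.abs_re_le_norm (μ - μ₀)
  rw [Metric.mem_ball, Complex.dist_eq] at h
  have h2 : |(μ - μ₀).re| < ε := lt_of_le_of_lt this h
  rw [Complex.sub_re] at h2
  cases abs_lt.1 h2 with
  | intro h3 h4 => linarith

lemma Fi_hasDeriv (c : ℝ) (hc : 0 < c) (k : ℂ) {μ₀ : ℂ} (hμ₀ : 0 < μ₀.re) :
    HasDerivAt (Fi c k)
      (∫ u in Set.Ioi (0:ℝ), -(u:ℂ) * (Complex.exp (-(μ₀ * u)) * ((u:ℂ) + c) ^ k)) μ₀ := by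
  set ε := μ₀.re / 2 with hε
  have hε0 : 0 < ε := by positivity
  have key := hasDerivAt_integral_of_dominated_loc_of_deriv_le (μ := volume.restrict (Set.Ioi 0))
    (F := fun μ (u : ℝ) => Complex.exp (-(μ * u)) * ((u:ℂ) + c) ^ k)
    (F' := fun μ (u : ℝ) => -(u:ℂ) * (Complex.exp (-(μ * u)) * ((u:ℂ) + c) ^ k))
    (x₀ := μ₀) (bound := fun u => u ^ 1 * (u + c) ^ k.re * Real.exp (-ε * u)) (Metric.ball_mem_nhds μ₀ hε0)
    (Filter.Eventually.of_forall (fun μ =>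
      ((Fi_cont c hc k μ).mono Set.Ioi_subset_Ici_self).aestronglyMeasurable measurableSet_Ioi))
    (Fi_integrable c hc k μ₀ hμ₀)
    ?_ ?_ (integrableAux 1 k.re c ε hc hε0) ?_
  · exact key.2
  · refine ContinuousOn.aestronglyMeasurable ?_ measurableSet_Ioi
    exact ((by fun_prop : ContinuousOn (fun u : ℝ => -(u:ℂ)) (Set.Ioi 0)).mul
      ((Fi_cont c hc k μ₀).mono Set.Ioi_subset_Ici_self))
  · filter_upwards [ae_restrict_mem measurableSet_Ioi] with u hu
    intro μ hμball
    have hμre : ε < μ.re := by have := ball_re hμball; rw [hε] at *; linarith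
    have hu : (0:ℝ) < u := hu
    rw [norm_mul, norm_Fi_integrand c hc k μ hu]
    simp only [norm_neg, Complex.norm_real, Real.norm_eq_abs, abs_of_pos hu, pow_one]
    have h1 : Real.exp (-(μ.re * u)) ≤ Real.exp (-ε * u) := by
      apply Real.exp_le_exp.2; nlinarith
    have h2 : (0:ℝ) ≤ (u + c) ^ k.re := (Real.rpow_pos_of_pos (by positivity) _).le
    calc u * (Real.exp (-(μ.re * u)) * (u + c) ^ k.re)
        ≤ u * (Real.exp (-ε * u) * (u + c) ^ k.re) := by
          apply mul_le_mul_of_nonneg_left _ hu.le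
          exact mul_le_mul_of_nonneg_right h1 h2
      _ = u * (u + c) ^ k.re * Real.exp (-ε * u) := by ring
  · filter_upwards [ae_restrict_mem measurableSet_Ioi] with u hu
    intro μ hμball
    have : HasDerivAt (fun μ : ℂ => Complex.exp (-(μ * u))) (-(u:ℂ) * Complex.exp (-(μ * u))) μ := by
      have h := (((hasDerivAt_id μ).mul_const (u:ℂ)).neg).cexp
      simpa [mul_comm] using h
    have h2 := this.mul_const (((u:ℂ) + c) ^ k)
    exact h2.congr_deriv (by ring)

lemma Gi_hasDeriv (c : ℝ) (hc : 0 < c) (k : ℂ) {μ₀ : ℂ} (hμ₀ : 0 < μ₀.re) :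
    HasDerivAt (Gi c k)
      (∫ t in Set.Ioi (0:ℝ),
        Complex.exp (-(t:ℂ)) * (k * ((t:ℂ) + μ₀ * c) ^ (k - 1) * c)) μ₀ := by
  set ε := μ₀.re / 2 with hεdef
  have hε0 : 0 < ε := by positivity
  set M := ‖μ₀‖ + ε with hMdef
  have hM0 : 0 < M := by positivity
  have key := hasDerivAt_integral_of_dominated_loc_of_deriv_le (μ := volume.restrict (Set.Ioi 0))
    (F := fun μ (t : ℝ) => Complex.exp (-(t:ℂ)) * ((t:ℂ) + μ * c) ^ k)
    (F' := fun μ (t : ℝ) => Complex.exp (-(t:ℂ)) * (k * ((t:ℂ) + μ * c) ^ (k - 1) * c))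
    (x₀ := μ₀) (bound := fun t => ‖k‖ * c * Real.exp (π * |k.im|) *
      ((t + c * ε) ^ (k.re - 1) * Real.exp (-1 * t) + (t + c * M) ^ (k.re - 1) * Real.exp (-1 * t)))
    (Metric.ball_mem_nhds μ₀ hε0) ?_ (Gi_integrable c hc k μ₀ hμ₀) ?_ ?_ ?_ ?_
  · exact key.2
  · refine ((Complex.continuous_re.continuousAt (x := μ₀)).eventually
      (eventually_gt_nhds hμ₀)).mono (fun μ h => ?_)
    exact ((Gi_cont c hc k μ h).mono Set.Ioi_subset_Ici_self).aestronglyMeasurable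
      measurableSet_Ioi
  · refine ContinuousOn.aestronglyMeasurable ?_ measurableSet_Ioi
    refine ContinuousOn.mul ((Complex.continuous_exp.comp (by fun_prop)).continuousOn) ?_
    refine ContinuousOn.mul (ContinuousOn.mul continuousOn_const
      (ContinuousOn.cpow (by fun_prop) continuousOn_const ?_)) continuousOn_const
    intro x hx
    have hx : (0:ℝ) < x := hx
    refine Or.inl ?_
    have : ((x:ℂ) + μ₀ * c).re = x + μ₀.re * c := by simp [Complex.mul_re]
    rw [this]
    nlinarith [mul_pos hμ₀ hc]
  · filter_upwards [ae_restrict_mem measurableSet_Ioi] with t ht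
    intro μ hμball
    have ht : (0:ℝ) < t := ht
    have hμre : ε < μ.re := by
      have := ball_re hμball
      rw [hεdef] at *
      linarith
    have hμM : ‖μ‖ ≤ M := by
      have hd : ‖(μ - μ₀)‖ < ε := by
        rw [Metric.mem_ball, Complex.dist_eq] at hμball; exact hμball
      calc ‖μ‖ = ‖(μ₀ + (μ - μ₀))‖ := by ring_nf
        _ ≤ ‖μ₀‖ + ‖(μ - μ₀)‖ := norm_add_le _ _
        _ ≤ M := by rw [hMdef]; linarith
    have hre : ((t:ℂ) + μ * c).re = t + c * μ.re := by simp [Complex.mul_re]; ring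
    have h1 : t + c * ε ≤ ‖((t:ℂ) + μ * c)‖ := by
      have : t + c * ε ≤ ((t:ℂ) + μ * c).re := by rw [hre]; nlinarith
      exact this.trans ((le_abs_self _).trans (Complex.abs_re_le_norm _))
    have h2 : ‖((t:ℂ) + μ * c)‖ ≤ t + c * M := by
      calc ‖((t:ℂ) + μ * c)‖ ≤ ‖(t:ℂ)‖ + ‖(μ * c)‖ :=
            norm_add_le _ _
        _ ≤ t + c * M := by
            rw [norm_mul, Complex.norm_real, Complex.norm_real, Real.norm_eq_abs, Real.norm_eq_abs, abs_of_pos ht, abs_of_pos hc]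
            nlinarith
    have hN := cpow_norm_bound (k - 1) (by positivity) h1 h2
    have him : (k - 1).im = k.im := by simp
    have hrek : (k - 1).re = k.re - 1 := by simp
    rw [him, hrek] at hN
    have hexp : ‖Complex.exp (-(t:ℂ))‖ = Real.exp (-t) := by
      rw [Complex.norm_exp]; simp
    rw [norm_mul, norm_mul, norm_mul, hexp]
    have hnormc : ‖(c:ℂ)‖ = c := by
      rw [Complex.norm_real, Real.norm_eq_abs, abs_of_pos hc]
    rw [hnormc]
    have hexpt1 : Real.exp (-t) ≤ 1 := Real.exp_le_one_iff.2 (by linarith)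
    have hkn : ‖k‖ = ‖k‖ := rfl
    calc Real.exp (-t) * (‖k‖ * ‖((t:ℂ) + μ * c) ^ (k - 1)‖ * c)
        ≤ Real.exp (-t) * (‖k‖ * (Real.exp (π * |k.im|) *
            ((t + c * ε) ^ (k.re - 1) + (t + c * M) ^ (k.re - 1))) * c) := by
          apply mul_le_mul_of_nonneg_left _ (Real.exp_pos _).le
          apply mul_le_mul_of_nonneg_right _ hc.le
          exact mul_le_mul_of_nonneg_left hN (norm_nonneg _)
      _ = ‖k‖ * c * Real.exp (π * |k.im|) *
            ((t + c * ε) ^ (k.re - 1) * Real.exp (-1 * t) +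
              (t + c * M) ^ (k.re - 1) * Real.exp (-1 * t)) := by
          rw [hkn]; ring_nf
  · refine (((integrableAux 0 (k.re - 1) (c * ε) 1 (by positivity) one_pos).add
      (integrableAux 0 (k.re - 1) (c * M) 1 (by positivity) one_pos)).const_mul
      (‖k‖ * c * Real.exp (π * |k.im|))).congr ?_
    exact Filter.Eventually.of_forall (fun t => by
      simp only [Pi.add_apply, pow_zero, one_mul])
  · filter_upwards [ae_restrict_mem measurableSet_Ioi] with t ht
    intro μ hμball
    have ht : (0:ℝ) < t := ht
    have hμre : ε < μ.re := by
      have := ball_re hμball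
      rw [hεdef] at *
      linarith
    have hd : HasDerivAt (fun μ : ℂ => (t:ℂ) + μ * c) (c:ℂ) μ := by
      simpa using ((hasDerivAt_id μ).mul_const (c:ℂ)).const_add ((t:ℂ))
    have hslit : ((t:ℂ) + μ * c) ∈ Complex.slitPlane := by
      refine Complex.mem_slitPlane_iff.2 (Or.inl ?_)
      have : ((t:ℂ) + μ * c).re = t + μ.re * c := by simp [Complex.mul_re]
      rw [this]
      nlinarith
    exact (hd.cpow_const hslit).const_mul _

lemma Fi_analytic (c : ℝ) (hc : 0 < c) (k : ℂ) :
    AnalyticOnNhd ℂ (Fi c k) {z : ℂ | 0 < z.re} :=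
  DifferentiableOn.analyticOnNhd
    (fun _ hμ => (Fi_hasDeriv c hc k hμ).differentiableAt.differentiableWithinAt)
    (isOpen_lt continuous_const Complex.continuous_re)

lemma Gi_analytic (c : ℝ) (hc : 0 < c) (k : ℂ) :
    AnalyticOnNhd ℂ (fun μ => μ ^ (-(k + 1)) * Gi c k μ) {z : ℂ | 0 < z.re} := by
  refine DifferentiableOn.analyticOnNhd (fun μ hμ => DifferentiableWithinAt.mul ?_ ?_)
    (isOpen_lt continuous_const Complex.continuous_re)
  · exact (differentiableAt_id.cpow (differentiableAt_const _)
      (Complex.mem_slitPlane_iff.2 (Or.inl hμ))).differentiableWithinAt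
  · exact (Gi_hasDeriv c hc k hμ).differentiableAt.differentiableWithinAt

lemma FiGi_real (c : ℝ) (hc : 0 < c) (k : ℂ) {r : ℝ} (hr : 0 < r) :
    Fi c k (r:ℂ) = (r:ℂ) ^ (-(k + 1)) * Gi c k (r:ℂ) := by
  have hr0 : (r:ℂ) ≠ 0 := by exact_mod_cast hr.ne'
  have h := MeasureTheory.integral_comp_mul_left_Ioi
    (fun t : ℝ => Complex.exp (-(t:ℂ)) * ((t:ℂ) + (r:ℂ) * c) ^ k) 0 hr
  rw [mul_zero] at h
  have hgr : ∀ u ∈ Set.Ioi (0:ℝ),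
      Complex.exp (-((r * u : ℝ):ℂ)) * (((r * u : ℝ):ℂ) + (r:ℂ) * c) ^ k
        = (r:ℂ) ^ k * (Complex.exp (-((r:ℂ) * u)) * ((u:ℂ) + c) ^ k) := by
    intro u hu
    have hu : (0:ℝ) < u := hu
    have h1 : (((r * u : ℝ):ℂ) + (r:ℂ) * c) = (((r * (u + c) : ℝ)):ℂ) := by push_cast; ring
    have h2 : (((r * (u + c) : ℝ)):ℂ) = ((r:ℝ):ℂ) * (((u + c : ℝ)):ℂ) := by push_cast; ring
    rw [h1, h2, Complex.mul_cpow_ofReal_nonneg hr.le (by positivity)]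
    push_cast
    ring
  have hLHS : (∫ u in Set.Ioi (0:ℝ),
      Complex.exp (-((r * u : ℝ):ℂ)) * (((r * u : ℝ):ℂ) + (r:ℂ) * c) ^ k)
        = (r:ℂ) ^ k * Fi c k (r:ℂ) := by
    rw [setIntegral_congr_fun measurableSet_Ioi hgr, MeasureTheory.integral_const_mul]
    rfl
  have h' : (r:ℂ) ^ k * Fi c k (r:ℂ) = (r:ℝ)⁻¹ • Gi c k (r:ℂ) := by
    rw [← hLHS]
    exact h
  have hsmul : ((r:ℝ)⁻¹ • Gi c k (r:ℂ)) = ((r:ℂ))⁻¹ * Gi c k (r:ℂ) := by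
    rw [Complex.real_smul]
    push_cast
    ring
  have hcp : (r:ℂ) ^ (-(k + 1)) = ((r:ℂ) ^ k)⁻¹ * ((r:ℂ))⁻¹ := by
    rw [show -(k+1) = -k + (-1:ℂ) by ring, Complex.cpow_add _ _ hr0, Complex.cpow_neg,
      Complex.cpow_neg_one]
  have hpow_ne : ((r:ℂ) ^ k) ≠ 0 := by
    intro h0
    exact hr0 (Complex.cpow_eq_zero_iff _ _ |>.1 h0).1
  have h'' : (r:ℂ) ^ k * Fi c k (r:ℂ) = ((r:ℂ))⁻¹ * Gi c k (r:ℂ) := by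
    rw [← hsmul]; exact h'
  rw [hcp]
  field_simp at h'' ⊢
  linear_combination h''

lemma FiGi (c : ℝ) (hc : 0 < c) (k : ℂ) {μ : ℂ} (hμ : 0 < μ.re) :
    Fi c k μ = μ ^ (-(k + 1)) * Gi c k μ := by
  have hU : IsPreconnected {z : ℂ | 0 < z.re} := (convex_halfSpace_re_gt 0).isPreconnected
  have h1 : (1:ℂ) ∈ {z : ℂ | 0 < z.re} := by norm_num [Set.mem_setOf_eq]
  set xn : ℕ → ℝ := fun n => 1 + 1 / (n + 1) with hxn
  have hxpos : ∀ n, 0 < xn n := fun n => by positivity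
  have hreal : Filter.Tendsto xn Filter.atTop (nhds 1) := by
    have := tendsto_one_div_add_atTop_nhds_zero_nat (𝕜 := ℝ)
    simpa [hxn] using this.const_add 1
  have hseq : Filter.Tendsto (fun n : ℕ => ((xn n : ℝ):ℂ)) Filter.atTop
      (nhdsWithin 1 {(1:ℂ)}ᶜ) := by
    rw [tendsto_nhdsWithin_iff]
    refine ⟨by simpa [Function.comp_def] using (Complex.continuous_ofReal.tendsto 1).comp hreal, ?_⟩
    refine Filter.Eventually.of_forall (fun n => ?_)
    simp only [Set.mem_compl_iff, Set.mem_singleton_iff]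
    intro h
    have h2 : xn n = 1 := by exact_mod_cast h
    have h3 : (1:ℝ) / (n + 1) > 0 := by positivity
    rw [hxn] at h2
    simp only at h2
    linarith
  have hfreq : ∃ᶠ z in nhdsWithin 1 {(1:ℂ)}ᶜ,
      Fi c k z = z ^ (-(k + 1)) * Gi c k z := by
    refine hseq.frequently (Filter.Eventually.frequently
      (Filter.Eventually.of_forall (fun n => ?_)))
    exact FiGi_real c hc k (hxpos n)
  exact (Fi_analytic c hc k).eqOn_of_preconnected_of_frequently_eq (Gi_analytic c hc k)
    hU h1 hfreq hμ

lemma image_exp_neg : (fun u : ℝ => Real.exp (-u)) '' Set.Ioi 0 = Set.Ioo 0 1 := by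
  ext x
  constructor
  · rintro ⟨u, hu, rfl⟩
    have hu : (0:ℝ) < u := hu
    exact ⟨Real.exp_pos _, by
      rw [show (1:ℝ) = Real.exp 0 by simp]
      exact Real.exp_lt_exp.2 (by linarith)⟩
  · rintro ⟨hx0, hx1⟩
    refine ⟨-Real.log x, ?_, ?_⟩
    · simp only [Set.mem_Ioi]
      have := Real.log_neg hx0 hx1
      linarith
    · show Real.exp (-(-Real.log x)) = x
      rw [neg_neg, Real.exp_log hx0]

lemma subst_exp_neg (g : ℝ → ℂ) :
    (∫ x in Set.Ioo (0:ℝ) 1, g x)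
      = ∫ u in Set.Ioi (0:ℝ), Real.exp (-u) • g (Real.exp (-u)) := by
  rw [← image_exp_neg]
  rw [MeasureTheory.integral_image_eq_integral_abs_deriv_smul measurableSet_Ioi
    (f' := fun u => -Real.exp (-u)) (fun x _ => ?_) (fun x _ y _ h => ?_) g]
  · simp [abs_of_pos (Real.exp_pos _)]
  · have h1 := (Real.hasDerivAt_exp (-x)).comp x (hasDerivAt_neg x)
    simpa [mul_comm, Function.comp_def] using h1.hasDerivWithinAt
  · have := Real.exp_injective h
    linarith

lemma key_term (a : ℝ) (ha0 : 0 < a) (ha1 : a < 1) (k μ : ℂ) (hμ : 0 < μ.re) :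
    Fi (-Real.log a) k μ
      = (a:ℂ) ^ (-μ) * uGamma (1 + k) (-(μ * Complex.log (a:ℂ))) / μ ^ (k + 1) := by
  set c : ℝ := -Real.log a with hcdef
  have hc : 0 < c := by
    have := Real.log_neg ha0 ha1
    rw [hcdef]; linarith
  have ha0' : (a:ℂ) ≠ 0 := by exact_mod_cast ha0.ne'
  have hlog : Complex.log (a:ℂ) = ((Real.log a : ℝ) : ℂ) := (Complex.ofReal_log ha0.le).symm
  have hz : -(μ * Complex.log (a:ℂ)) = μ * (c:ℂ) := by
    rw [hlog, hcdef]
    push_cast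
    ring
  have hμ0 : μ ≠ 0 := fun h => by simp [h] at hμ
  have hG : uGamma (1 + k) (-(μ * Complex.log (a:ℂ)))
      = Complex.exp (-(μ * (c:ℂ))) * Gi c k μ := by
    rw [hz, uGamma, Gi]
    congr 1
    refine setIntegral_congr_fun measurableSet_Ioi (fun t _ => ?_)
    congr 1
    ring_nf
  have hax : (a:ℂ) ^ (-μ) = Complex.exp (μ * (c:ℂ)) := by
    rw [Complex.cpow_def_of_ne_zero ha0', hlog, hcdef]
    push_cast
    ring_nf
  rw [FiGi c hc k hμ, hG, hax, Complex.cpow_neg]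
  have hee : Complex.exp (μ * (c:ℂ)) * (Complex.exp (-(μ * (c:ℂ))) * Gi c k μ)
      = Gi c k μ := by
    rw [← mul_assoc, ← Complex.exp_add]
    simp
  rw [div_eq_mul_inv, hee]
  ring

theorem stmt6_aux (a : ℝ) (ha0 : 0 < a) (ha1 : a < 1) (n : ℕ) (b k m : ℂ) (hm : -1 < m.re) :
    (∫ x in (0:ℝ)..1, (x:ℂ) ^ m * (1 + b * (x:ℂ)) ^ n
        * (Complex.log (1 / ((a:ℂ) * (x:ℂ)))) ^ k)
    = ∑ j ∈ Finset.Icc 1 (n + 1), (Nat.choose n (j - 1) : ℂ) * b ^ (j - 1)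
        * (a:ℂ) ^ (-((j:ℂ) + m)) * uGamma (1 + k) (-(((j:ℂ) + m) * Complex.log (a:ℂ)))
        / ((j:ℂ) + m) ^ (k + 1) := by
  set c : ℝ := -Real.log a with hcdef
  have hc : 0 < c := by
    have := Real.log_neg ha0 ha1
    rw [hcdef]; linarith
  set μi : ℕ → ℂ := fun i => (i:ℂ) + 1 + m with hμi
  have hμire : ∀ i : ℕ, 0 < (μi i).re := by
    intro i
    simp only [hμi, Complex.add_re, Complex.natCast_re, Complex.one_re]
    have : (0:ℝ) ≤ i := Nat.cast_nonneg i
    linarith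
  have hμine : ∀ i : ℕ, μi i ≠ 0 := fun i h => by simpa [h] using hμire i
  -- move to Ioo then substitute
  rw [intervalIntegral.integral_of_le zero_le_one, MeasureTheory.integral_Ioc_eq_integral_Ioo,
    subst_exp_neg]
  -- pointwise rewrite of the integrand
  have hpt : ∀ u ∈ Set.Ioi (0:ℝ),
      Real.exp (-u) • (((Real.exp (-u) : ℝ):ℂ) ^ m
          * (1 + b * ((Real.exp (-u) : ℝ):ℂ)) ^ n
          * (Complex.log (1 / ((a:ℂ) * ((Real.exp (-u) : ℝ):ℂ)))) ^ k)
        = ∑ i ∈ Finset.range (n + 1), ((n.choose i : ℂ) * b ^ i)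
            * (Complex.exp (-(μi i * u)) * ((u:ℂ) + c) ^ k) := by
    intro u _
    have hE : ((Real.exp (-u) : ℝ):ℂ) = Complex.exp (-(u:ℂ)) := by
      rw [Complex.ofReal_exp]; norm_cast
    have hEm : Complex.exp (-(u:ℂ)) ^ m = Complex.exp (-(u:ℂ) * m) := by
      rw [Complex.cpow_def_of_ne_zero (Complex.exp_ne_zero _), Complex.log_exp]
      · simp
        linarith [Real.pi_pos]
      · simp
        linarith [Real.pi_pos]
    have haE : (a:ℂ) * Complex.exp (-(u:ℂ)) = (((a * Real.exp (-u) : ℝ)):ℂ) := by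
      rw [Complex.ofReal_mul, Complex.ofReal_exp]; norm_cast
    have hL : Complex.log (1 / ((a:ℂ) * Complex.exp (-(u:ℂ)))) = (((u + c : ℝ)):ℂ) := by
      rw [haE, show (1 : ℂ) / (((a * Real.exp (-u) : ℝ)):ℂ)
            = (((1 / (a * Real.exp (-u)) : ℝ)):ℂ) by push_cast; ring,
        ← Complex.ofReal_log (by positivity)]
      congr 1
      rw [one_div, Real.log_inv, Real.log_mul ha0.ne' (Real.exp_ne_zero _), Real.log_exp, hcdef]
      ring
    have hpow : (1 + b * Complex.exp (-(u:ℂ))) ^ n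
        = ∑ i ∈ Finset.range (n + 1),
            (b * Complex.exp (-(u:ℂ))) ^ i * (n.choose i : ℂ) := by
      rw [add_comm, add_pow]
      refine Finset.sum_congr rfl (fun i _ => by rw [one_pow, mul_one])
    rw [hE, hEm, hL, hpow, Finset.mul_sum, Finset.sum_mul, Finset.smul_sum]
    refine Finset.sum_congr rfl (fun i _ => ?_)
    push_cast
    rw [mul_pow, ← Complex.exp_nat_mul]
    rw [Complex.real_smul, Complex.ofReal_exp]
    have : ((-u : ℝ):ℂ) = -(u:ℂ) := by norm_cast
    rw [this]
    rw [show Complex.exp (-(μi i * u)) = Complex.exp (-(u:ℂ))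
          * (Complex.exp (-(u:ℂ) * m) * Complex.exp ((i:ℂ) * -(u:ℂ))) by
        rw [← Complex.exp_add, ← Complex.exp_add, hμi]
        congr 1
        ring]
    ring
  rw [setIntegral_congr_fun measurableSet_Ioi hpt]
  rw [MeasureTheory.integral_finset_sum _ (fun i _ =>
    ((Fi_integrable c hc k (μi i) (hμire i)).const_mul _))]
  have hterm : ∀ i ∈ Finset.range (n + 1),
      (∫ u in Set.Ioi (0:ℝ), ((n.choose i : ℂ) * b ^ i)
          * (Complex.exp (-(μi i * u)) * ((u:ℂ) + c) ^ k))
        = ((n.choose i : ℂ) * b ^ i)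
            * ((a:ℂ) ^ (-(μi i)) * uGamma (1 + k) (-(μi i * Complex.log (a:ℂ)))
              / (μi i) ^ (k + 1)) := by
    intro i _
    rw [MeasureTheory.integral_const_mul]
    congr 1
    rw [← key_term a ha0 ha1 k (μi i) (hμire i), Fi, hcdef]
  rw [Finset.sum_congr rfl hterm]
  -- reindex
  refine Finset.sum_nbij' (fun i => i + 1) (fun j => j - 1) ?_ ?_ ?_ ?_ ?_
  · intro i hi
    simp only [Finset.mem_range] at hi
    simp only [Finset.mem_Icc]
    omega
  · intro j hj
    simp only [Finset.mem_Icc] at hj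
    simp only [Finset.mem_range]
    omega
  · intro i hi
    simp
  · intro j hj
    simp only [Finset.mem_Icc] at hj
    omega
  · intro i hi
    have h1 : ((i + 1 : ℕ):ℂ) + m = μi i := by
      rw [hμi]; push_cast; ring
    rw [Nat.add_sub_cancel, h1]
    ring

end Stmt6Aux

theorem stmt6 (a : ℝ) (ha0 : 0 < a) (ha1 : a < 1) (n : ℕ) (b k m : ℂ) (hm : -1 < m.re) :
    (∫ x in (0:ℝ)..1, (x:ℂ) ^ m * (1 + b * (x:ℂ)) ^ n
        * (Complex.log (1 / ((a:ℂ) * (x:ℂ)))) ^ k)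
    = ∑ j ∈ Finset.Icc 1 (n + 1), (Nat.choose n (j - 1) : ℂ) * b ^ (j - 1)
        * (a:ℂ) ^ (-((j:ℂ) + m)) * uGamma (1 + k) (-(((j:ℂ) + m) * Complex.log (a:ℂ)))
        / ((j:ℂ) + m) ^ (k + 1) :=
  Stmt6Aux.stmt6_aux a ha0 ha1 n b k m hm
end
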